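/- arXiv:2311.06490 — 6 statements merged into one kernel-verified Lean document; each statement's English description precedes it below -/
import Mathlib

section
/- If G is a graph of order n whose minimum hop degree δ_h satisfies δ_h ≥ 1, then γ_{2step}(G) ≤ ((ln δ_h + 1)/δ_h) · n. -/
open Finset

noncomputable section
open scoped Classical

variable {n : ℕ}

/-- The set of vertices at distance exactly 2 from `i`. -/
def N2 (G : SimpleGraph (Fin n)) (i : Fin n) : Finset (Fin n) :=
  Finset.univ.filter (fun j => G.dist i j = 2)

/-- The neighborhood of `i`. -/
def Nbr (G : SimpleGraph (Fin n)) (i : Fin n) : Finset (Fin n) :=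
  Finset.univ.filter (fun j => G.Adj i j)

/-- Hop degree of a vertex. -/
def hopDeg (G : SimpleGraph (Fin n)) (i : Fin n) : ℕ := (N2 G i).card

/-- Minimum hop degree. -/
def minHopDeg (G : SimpleGraph (Fin n)) : ℕ := ⨅ i, hopDeg G i

/-- Minimum degree. -/
def minDeg (G : SimpleGraph (Fin n)) : ℕ := ⨅ i, (Nbr G i).card

def IsHopDomSet (G : SimpleGraph (Fin n)) (S : Finset (Fin n)) : Prop :=
  ∀ u, u ∉ S → ∃ v ∈ S, G.dist u v = 2

def IsTwoStepDomSet (G : SimpleGraph (Fin n)) (S : Finset (Fin n)) : Prop :=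
  ∀ u : Fin n, ∃ v ∈ S, G.dist u v = 2

def IsRestrainedHopDomSet (G : SimpleGraph (Fin n)) (S : Finset (Fin n)) : Prop :=
  IsHopDomSet G S ∧ ∀ u, u ∉ S → ∃ v, v ∉ S ∧ G.Adj u v

def IsTotalRestrainedHopDomSet (G : SimpleGraph (Fin n)) (S : Finset (Fin n)) : Prop :=
  IsTwoStepDomSet G S ∧ ∀ u, u ∉ S → ∃ v, v ∉ S ∧ G.Adj u v

def IsTwoStepRestrainedDomSet (G : SimpleGraph (Fin n)) (S : Finset (Fin n)) : Prop :=
  IsHopDomSet G S ∧ ∀ u, u ∉ S → ∃ v, v ∉ S ∧ G.dist u v = 2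

def IsTotalTwoStepRestrainedDomSet (G : SimpleGraph (Fin n)) (S : Finset (Fin n)) : Prop :=
  IsTwoStepDomSet G S ∧ ∀ u, u ∉ S → ∃ v, v ∉ S ∧ G.dist u v = 2

def hopDomNum (G : SimpleGraph (Fin n)) : ℕ :=
  sInf {k | ∃ S : Finset (Fin n), IsHopDomSet G S ∧ S.card = k}

def twoStepDomNum (G : SimpleGraph (Fin n)) : ℕ :=
  sInf {k | ∃ S : Finset (Fin n), IsTwoStepDomSet G S ∧ S.card = k}

def rhDomNum (G : SimpleGraph (Fin n)) : ℕ :=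
  sInf {k | ∃ S : Finset (Fin n), IsRestrainedHopDomSet G S ∧ S.card = k}

def trhDomNum (G : SimpleGraph (Fin n)) : ℕ :=
  sInf {k | ∃ S : Finset (Fin n), IsTotalRestrainedHopDomSet G S ∧ S.card = k}

def tsrDomNum (G : SimpleGraph (Fin n)) : ℕ :=
  sInf {k | ∃ S : Finset (Fin n), IsTwoStepRestrainedDomSet G S ∧ S.card = k}

def ttsrDomNum (G : SimpleGraph (Fin n)) : ℕ :=
  sInf {k | ∃ S : Finset (Fin n), IsTotalTwoStepRestrainedDomSet G S ∧ S.card = k}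

/-- The graph `Dist(G;2)` joining vertices at distance exactly 2 in `G`. -/
def dist2Graph (G : SimpleGraph (Fin n)) : SimpleGraph (Fin n) where
  Adj u v := u ≠ v ∧ G.dist u v = 2
  symm := by
    constructor
    intro u v h
    exact ⟨h.1.symm, by rw [SimpleGraph.dist_comm]; exact h.2⟩
  loopless := ⟨fun v h => h.1 rfl⟩

def domNum (H : SimpleGraph (Fin n)) : ℕ :=
  sInf {k | ∃ S : Finset (Fin n), (∀ u, u ∉ S → ∃ v ∈ S, H.Adj u v) ∧ S.card = k}

def totalDomNum (H : SimpleGraph (Fin n)) : ℕ :=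
  sInf {k | ∃ S : Finset (Fin n), (∀ u : Fin n, ∃ v ∈ S, H.Adj u v) ∧ S.card = k}

/-- Matching number: maximum number of edges in a matching. -/
def matchingNum (G : SimpleGraph (Fin n)) : ℕ :=
  sSup {k | ∃ M : SimpleGraph.Subgraph G, M.IsMatching ∧ M.edgeSet.ncard = k}

/-- A hop matching: a set of paths of length two, no two of which share an end vertex. -/
def IsHopMatching (G : SimpleGraph (Fin n)) (H : Finset (Fin n × Fin n × Fin n)) : Prop :=
  (∀ t ∈ H, G.Adj t.1 t.2.1 ∧ G.Adj t.2.1 t.2.2 ∧ t.1 ≠ t.2.2) ∧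
  ∀ t ∈ H, ∀ t' ∈ H, t ≠ t' →
    t.1 ≠ t'.1 ∧ t.1 ≠ t'.2.2 ∧ t.2.2 ≠ t'.1 ∧ t.2.2 ≠ t'.2.2

/-- Hop matching number. -/
def hopMatchingNum (G : SimpleGraph (Fin n)) : ℕ :=
  sSup {k | ∃ H : Finset (Fin n × Fin n × Fin n), IsHopMatching G H ∧ H.card = k}

def frh (G : SimpleGraph (Fin n)) (p : Fin n → ℝ) : ℝ :=
  (∑ i, p i) + (∑ i, (1 - p i) * ∏ j ∈ N2 G i, (1 - p j)) +
  ∑ i, (1 - p i) * (1 - (1 - p i) * ∏ j ∈ N2 G i, (1 - p j)) *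
    ∏ j ∈ Nbr G i, (p j + (1 - p j) * ∏ k ∈ N2 G j, (1 - p k))

def f2sr (G : SimpleGraph (Fin n)) (p : Fin n → ℝ) : ℝ :=
  (∑ i, p i) + (∑ i, (1 - p i) * ∏ j ∈ N2 G i, (1 - p j)) +
  ∑ i, (1 - p i) * (1 - (1 - p i) * ∏ j ∈ N2 G i, (1 - p j)) *
    ∏ j ∈ N2 G i, (p j + (1 - p j) * ∏ k ∈ N2 G j, (1 - p k))

def ZSet (G : SimpleGraph (Fin n)) (X : Finset (Fin n)) : Finset (Fin n) :=
  Finset.univ.filter (fun i => i ∉ X ∧ N2 G i ∩ X = ∅)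

def YSet (G : SimpleGraph (Fin n)) (X : Finset (Fin n)) : Finset (Fin n) :=
  Finset.univ.filter (fun i => i ∉ X ∪ ZSet G X ∧ Nbr G i ⊆ X ∪ ZSet G X)

def DSet (G : SimpleGraph (Fin n)) (X : Finset (Fin n)) : Finset (Fin n) :=
  X ∪ ZSet G X ∪ YSet G X

lemma sum_prod_bool {n : ℕ} (c : Fin n → Bool → ℝ) :
    ∑ f : Fin n → Bool, ∏ i, c i (f i) = ∏ i, (c i true + c i false) := by
  rw [← Fintype.prod_sum fun i b => c i b]
  exact Finset.prod_congr rfl fun i _ => by simp [Fintype.sum_bool]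

lemma marg_zero {n : ℕ} (p : ℝ) (A : Finset (Fin n)) :
    ∑ f : Fin n → Bool, (∏ i, (if f i then p else 1 - p)) *
      ∏ j ∈ A, (if f j then (0 : ℝ) else 1) = (1 - p) ^ A.card := by
  have h : ∀ f : Fin n → Bool,
      (∏ i, (if f i then p else 1 - p)) * ∏ j ∈ A, (if f j then (0 : ℝ) else 1)
        = ∏ i, ((if f i then p else 1 - p) *
            (if i ∈ A then (if f i then (0 : ℝ) else 1) else 1)) := by
    intro f
    rw [Finset.prod_mul_distrib, Fintype.prod_ite_mem A fun j => (if f j then (0 : ℝ) else 1)]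
  have h2 : ∀ i : Fin n,
      ((if (true : Bool) then p else 1 - p) *
          (if i ∈ A then (if (true : Bool) then (0 : ℝ) else 1) else 1) +
        (if (false : Bool) then p else 1 - p) *
          (if i ∈ A then (if (false : Bool) then (0 : ℝ) else 1) else 1))
        = if i ∈ A then (1 - p) else 1 := by
    intro i; by_cases hi : i ∈ A <;> simp [hi]
  calc ∑ f : Fin n → Bool, (∏ i, (if f i then p else 1 - p)) *
          ∏ j ∈ A, (if f j then (0 : ℝ) else 1)
      = ∑ f : Fin n → Bool, ∏ i, ((if f i then p else 1 - p) *
          (if i ∈ A then (if f i then (0 : ℝ) else 1) else 1)) :=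
        Finset.sum_congr rfl fun f _ => h f
    _ = ∏ i, (((if (true : Bool) then p else 1 - p) *
          (if i ∈ A then (if (true : Bool) then (0 : ℝ) else 1) else 1)) +
        ((if (false : Bool) then p else 1 - p) *
          (if i ∈ A then (if (false : Bool) then (0 : ℝ) else 1) else 1))) :=
        sum_prod_bool (fun i b => (if b then p else 1 - p) *
          (if i ∈ A then (if b then (0 : ℝ) else 1) else 1))
    _ = ∏ i, (if i ∈ A then (1 - p) else 1) := Finset.prod_congr rfl fun i _ => h2 i
    _ = (1 - p) ^ A.card := by rw [Fintype.prod_ite_mem, Finset.prod_const]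

lemma marg_one {n : ℕ} (p : ℝ) (i0 : Fin n) :
    ∑ f : Fin n → Bool, (∏ i, (if f i then p else 1 - p)) *
      (if f i0 then (1 : ℝ) else 0) = p := by
  have h0 := marg_zero p (∅ : Finset (Fin n))
  have h1 := marg_zero p ({i0} : Finset (Fin n))
  simp only [Finset.prod_empty, mul_one, Finset.card_empty, pow_zero,
    Finset.prod_singleton, Finset.card_singleton, pow_one] at h0 h1
  have key : ∀ f : Fin n → Bool,
      (∏ i, (if f i then p else 1 - p)) * (if f i0 then (1 : ℝ) else 0)
        = (∏ i, (if f i then p else 1 - p)) -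
          (∏ i, (if f i then p else 1 - p)) * (if f i0 then (0 : ℝ) else 1) := by
    intro f; cases h : f i0 <;> simp [h]
  simp_rw [key, Finset.sum_sub_distrib, h0, h1]
  ring
lemma exists_good {n : ℕ} (G : SimpleGraph (Fin n)) (p : ℝ) (hp0 : 0 ≤ p) (hp1 : p ≤ 1) :
    ∃ f : Fin n → Bool,
      ((Finset.univ.filter fun i => f i = true).card : ℝ) +
        ((Finset.univ.filter fun i : Fin n => ∀ j ∈ N2 G i, f j = false).card : ℝ) ≤
      p * n + ∑ i, (1 - p) ^ hopDeg G i := by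
  set w : (Fin n → Bool) → ℝ := fun f => ∏ i, (if f i then p else 1 - p) with hw
  set F : (Fin n → Bool) → ℝ := fun f =>
      ((Finset.univ.filter fun i => f i = true).card : ℝ) +
        ((Finset.univ.filter fun i : Fin n => ∀ j ∈ N2 G i, f j = false).card : ℝ) with hF
  have hw0 : ∀ f, 0 ≤ w f := fun f =>
    Finset.prod_nonneg fun i _ => by split <;> linarith
  have hw1 : ∑ f : Fin n → Bool, w f = 1 := by
    have := marg_zero p (∅ : Finset (Fin n))
    simpa using this
  -- indicator identities
  have hcard1 : ∀ f : Fin n → Bool,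
      ((Finset.univ.filter fun i => f i = true).card : ℝ) =
        ∑ i, (if f i then (1 : ℝ) else 0) := by
    intro f
    rw [Finset.card_filter]
    push_cast
    exact Finset.sum_congr rfl fun i _ => by by_cases h : f i <;> simp [h]
  have hcard2 : ∀ f : Fin n → Bool,
      ((Finset.univ.filter fun i : Fin n => ∀ j ∈ N2 G i, f j = false).card : ℝ) =
        ∑ i, ∏ j ∈ N2 G i, (if f j then (0 : ℝ) else 1) := by
    intro f
    rw [Finset.card_filter]
    push_cast
    refine Finset.sum_congr rfl fun i _ => ?_
    by_cases h : ∀ j ∈ N2 G i, f j = false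
    · rw [if_pos h, Finset.prod_congr rfl fun j hj => if_neg (by simp [h j hj]), Finset.prod_const_one]
    · push_neg at h
      obtain ⟨j, hj, hfj⟩ := h
      rw [if_neg (by push_neg; exact ⟨j, hj, hfj⟩), Finset.prod_eq_zero hj (by simp at hfj; simp [hfj])]
  have hE : ∑ f : Fin n → Bool, w f * F f = p * n + ∑ i, (1 - p) ^ hopDeg G i := by
    have : ∀ f : Fin n → Bool, w f * F f =
        (∑ i, w f * (if f i then (1 : ℝ) else 0)) +
          ∑ i, w f * ∏ j ∈ N2 G i, (if f j then (0 : ℝ) else 1) := by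
      intro f
      rw [hF]
      dsimp only
      rw [hcard1 f, hcard2 f, mul_add, Finset.mul_sum, Finset.mul_sum]
    rw [Finset.sum_congr rfl fun f _ => this f, Finset.sum_add_distrib]
    congr 1
    · rw [Finset.sum_comm, hw]
      rw [Finset.sum_congr rfl fun i (_ : i ∈ Finset.univ) => marg_one p i,
        Finset.sum_const, Finset.card_univ, Fintype.card_fin, nsmul_eq_mul, mul_comm]
    · rw [Finset.sum_comm, hw]
      rw [Finset.sum_congr rfl fun i (_ : i ∈ Finset.univ) => marg_zero p (N2 G i)]
      rfl
  by_contra hcon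
  push_neg at hcon
  have hlt : ∀ f : Fin n → Bool, w f * (p * n + ∑ i, (1 - p) ^ hopDeg G i) ≤ w f * F f :=
    fun f => mul_le_mul_of_nonneg_left (hcon f).le (hw0 f)
  have hex : ∃ f : Fin n → Bool, 0 < w f := by
    by_contra hz
    push_neg at hz
    have : ∑ f : Fin n → Bool, w f = 0 :=
      le_antisymm (Finset.sum_nonpos fun f _ => hz f) (Finset.sum_nonneg fun f _ => hw0 f)
    rw [hw1] at this; norm_num at this
  obtain ⟨f0, hf0⟩ := hex
  have : ∑ f : Fin n → Bool, w f * (p * n + ∑ i, (1 - p) ^ hopDeg G i) <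
      ∑ f : Fin n → Bool, w f * F f := by
    refine Finset.sum_lt_sum (fun f _ => hlt f) ⟨f0, Finset.mem_univ f0, ?_⟩
    exact mul_lt_mul_of_pos_left (hcon f0) hf0
  rw [hE, ← Finset.sum_mul, hw1, one_mul] at this
  exact lt_irrefl _ this
theorem stmt2 {n : ℕ} (G : SimpleGraph (Fin n)) (hδh : 1 ≤ minHopDeg G) :
    (twoStepDomNum G : ℝ) ≤
      (Real.log (minHopDeg G) + 1) / (minHopDeg G) * n := by
  set δ := minHopDeg G with hδ
  set d : ℝ := (δ : ℝ) with hd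
  have hd1 : (1 : ℝ) ≤ d := by rw [hd]; exact_mod_cast hδh
  have hd0 : 0 < d := by linarith
  set p : ℝ := Real.log d / d with hp
  have hlog0 : 0 ≤ Real.log d := Real.log_nonneg hd1
  have hp0 : 0 ≤ p := div_nonneg hlog0 hd0.le
  have hp1 : p ≤ 1 := by
    rw [hp, div_le_one hd0]
    have := Real.log_le_sub_one_of_pos hd0
    linarith
  have hdeg : ∀ i, δ ≤ hopDeg G i := fun i => by
    rw [hδ, minHopDeg]; exact ciInf_le (OrderBot.bddBelow _) i
  -- bound on the exponential sum
  have hpow : ∀ i : Fin n, (1 - p) ^ hopDeg G i ≤ 1 / d := by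
    intro i
    have h1 : (1 - p) ^ hopDeg G i ≤ (1 - p) ^ δ :=
      pow_le_pow_of_le_one (by linarith) (by linarith) (hdeg i)
    have h2 : (1 - p) ^ δ ≤ Real.exp (-p) ^ δ := by
      refine pow_le_pow_left₀ (by linarith) ?_ δ
      have := Real.add_one_le_exp (-p)
      linarith
    have h3 : Real.exp (-p) ^ δ = Real.exp (-(p * δ)) := by
      rw [← Real.exp_nat_mul]; ring_nf
    have h4 : p * δ = Real.log d := by
      rw [hp]; field_simp; rfl
    rw [h3, h4, Real.exp_neg, Real.exp_log hd0] at h2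
    calc (1 - p) ^ hopDeg G i ≤ (1 - p) ^ δ := h1
      _ ≤ d⁻¹ := h2
      _ = 1 / d := (one_div d).symm
  obtain ⟨f, hf⟩ := exists_good G p hp0 hp1
  -- choose a vertex at distance 2 from each vertex
  have hne : ∀ i : Fin n, (N2 G i).Nonempty := fun i =>
    Finset.card_pos.mp (Nat.lt_of_lt_of_le hδh (hdeg i))
  set g : Fin n → Fin n := fun i => (hne i).choose with hg
  have hgmem : ∀ i, g i ∈ N2 G i := fun i => (hne i).choose_spec
  set S := Finset.univ.filter fun i => f i = true with hS
  set U := Finset.univ.filter (fun i : Fin n => ∀ j ∈ N2 G i, f j = false) with hU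
  set T := S ∪ U.image g with hT
  have hdom : IsTwoStepDomSet G T := by
    intro u
    by_cases h : ∀ j ∈ N2 G u, f j = false
    · refine ⟨g u, Finset.mem_union_right _ (Finset.mem_image.mpr ⟨u, ?_, rfl⟩), ?_⟩
      · simp only [hU, Finset.mem_filter, Finset.mem_univ, true_and]; exact h
      · have := hgmem u
        simp only [N2, Finset.mem_filter] at this
        exact this.2
    · push_neg at h
      obtain ⟨j, hj, hfj⟩ := h
      refine ⟨j, Finset.mem_union_left _ ?_, ?_⟩
      · simp only [hS, Finset.mem_filter, Finset.mem_univ, true_and]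
        simpa using hfj
      · simp only [N2, Finset.mem_filter] at hj
        exact hj.2
  have hTdn : twoStepDomNum G ≤ T.card := Nat.sInf_le ⟨T, hdom, rfl⟩
  have hTcard : (T.card : ℝ) ≤ (S.card : ℝ) + (U.card : ℝ) := by
    have := (Finset.card_union_le S (U.image g)).trans
      (Nat.add_le_add_left Finset.card_image_le _)
    exact_mod_cast this
  have hsum : (∑ i : Fin n, (1 - p) ^ hopDeg G i) ≤ n * (1 / d) := by
    calc ∑ i : Fin n, (1 - p) ^ hopDeg G i ≤ ∑ _i : Fin n, 1 / d :=
          Finset.sum_le_sum fun i _ => hpow i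
      _ = n * (1 / d) := by rw [Finset.sum_const]; simp [mul_comm]
  have final : (twoStepDomNum G : ℝ) ≤ p * n + n * (1 / d) := by
    calc (twoStepDomNum G : ℝ) ≤ (T.card : ℝ) := by exact_mod_cast hTdn
      _ ≤ (S.card : ℝ) + (U.card : ℝ) := hTcard
      _ ≤ p * n + ∑ i, (1 - p) ^ hopDeg G i := hf
      _ ≤ p * n + n * (1 / d) := by linarith
  calc (twoStepDomNum G : ℝ) ≤ p * n + n * (1 / d) := final
    _ = (Real.log d + 1) / d * n := by rw [hp]; field_simp
end
end

section
/- If G is a graph of order n with δ_h(G) ≥ 1 and matching number ν(G) ≥ γ_h(G), then γ_{rh}(G) ≤ ((2 ln(δ_h + 1) + δ_h + 3)/(δ_h + 1)) · n − 2ν(G). -/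
open Finset

noncomputable section
open scoped Classical

variable {n : ℕ}

section AuxProofs

variable {n : ℕ}

private def wgt (p : ℝ) (b : Bool) : ℝ := if b then p else 1 - p

private lemma wgt_pos {p : ℝ} (hp0 : 0 < p) (hp1 : p < 1) (b : Bool) : 0 < wgt p b := by
  cases b <;> simp [wgt] <;> linarith

private lemma sum_bool_prod (c : Fin n → Bool → ℝ) :
    ∑ g : Fin n → Bool, ∏ i, c i (g i) = ∏ i, (c i true + c i false) := by
  rw [← Fintype.prod_sum (fun (i : Fin n) (b : Bool) => c i b)]
  exact Finset.prod_congr rfl fun i _ => by simp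

private lemma exp_indicator (p : ℝ) (T : Finset (Fin n)) (b₀ : Bool) :
    ∑ g : Fin n → Bool, (∏ i, wgt p (g i)) *
        (if ∀ j ∈ T, g j = b₀ then (1:ℝ) else 0)
      = (wgt p b₀) ^ T.card := by
  have key : ∀ g : Fin n → Bool,
      (∏ i, wgt p (g i)) * (if ∀ j ∈ T, g j = b₀ then (1:ℝ) else 0)
        = ∏ i, (wgt p (g i) * (if i ∈ T then (if g i = b₀ then (1:ℝ) else 0) else 1)) := by
    intro g
    rw [Finset.prod_mul_distrib]
    congr 1
    rw [Fintype.prod_ite_mem T (fun i => if g i = b₀ then (1:ℝ) else 0)]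
    by_cases h : ∀ j ∈ T, g j = b₀
    · rw [if_pos h, Finset.prod_congr rfl (fun j hj => if_pos (h j hj)),
        Finset.prod_const_one]
    · push_neg at h
      obtain ⟨j, hjT, hj⟩ := h
      rw [if_neg (by push_neg; exact ⟨j, hjT, hj⟩)]
      exact (Finset.prod_eq_zero hjT
        (show (if g j = b₀ then (1:ℝ) else 0) = 0 from if_neg hj)).symm
  set c : Fin n → Bool → ℝ :=
    fun i b => wgt p b * (if i ∈ T then (if b = b₀ then (1:ℝ) else 0) else 1) with hc
  have hcoord : ∀ i : Fin n, c i true + c i false = if i ∈ T then wgt p b₀ else 1 := by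
    intro i
    by_cases hi : i ∈ T <;> cases b₀ <;> simp [hc, hi, wgt] <;> ring
  calc ∑ g : Fin n → Bool, (∏ i, wgt p (g i)) *
        (if ∀ j ∈ T, g j = b₀ then (1:ℝ) else 0)
      = ∑ g : Fin n → Bool, ∏ i, c i (g i) := Finset.sum_congr rfl fun g _ => key g
    _ = ∏ i, (c i true + c i false) := sum_bool_prod c
    _ = ∏ i, (if i ∈ T then wgt p b₀ else 1) := Finset.prod_congr rfl fun i _ => hcoord i
    _ = ∏ _i ∈ T, wgt p b₀ := Fintype.prod_ite_mem T (fun _ => wgt p b₀)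
    _ = (wgt p b₀) ^ T.card := Finset.prod_const _

private lemma exists_small_hopdom (G : SimpleGraph (Fin n)) {p : ℝ}
    (hp0 : 0 < p) (hp1 : p < 1) :
    ∃ S : Finset (Fin n), IsHopDomSet G S ∧
      (S.card : ℝ) ≤ p * n + ∑ i, (1 - p) ^ (hopDeg G i + 1) := by
  set Sg : (Fin n → Bool) → Finset (Fin n) :=
    fun g => Finset.univ.filter (fun i => ∀ j ∈ ({i} : Finset (Fin n)), g j = true) with hSg
  set Wg : (Fin n → Bool) → Finset (Fin n) :=
    fun g => Finset.univ.filter (fun i => ∀ j ∈ insert i (N2 G i), g j = false) with hWg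
  have hdom : ∀ g, IsHopDomSet G (Sg g ∪ Wg g) := by
    intro g u hu
    have huS : u ∉ Sg g := fun h => hu (Finset.mem_union_left _ h)
    have huW : u ∉ Wg g := fun h => hu (Finset.mem_union_right _ h)
    have h1 : ¬ ∀ j ∈ insert u (N2 G u), g j = false := by
      intro h; exact huW (Finset.mem_filter.mpr ⟨Finset.mem_univ u, h⟩)
    push_neg at h1
    obtain ⟨j, hjmem, hj⟩ := h1
    have hj' : g j = true := by simpa using hj
    rcases Finset.mem_insert.mp hjmem with rfl | hjN2
    · exact absurd (Finset.mem_filter.mpr ⟨Finset.mem_univ j, by simpa using hj'⟩) huS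
    · refine ⟨j, Finset.mem_union_left _ ?_, (Finset.mem_filter.mp hjN2).2⟩
      exact Finset.mem_filter.mpr ⟨Finset.mem_univ j, by simpa using hj'⟩
  -- expectation computation
  have hself : ∀ i : Fin n, i ∉ N2 G i := by
    intro i hi
    have := (Finset.mem_filter.mp hi).2
    simp [SimpleGraph.dist_self] at this
  have hcardins : ∀ i : Fin n, (insert i (N2 G i)).card = hopDeg G i + 1 := by
    intro i
    rw [Finset.card_insert_of_notMem (hself i)]
    rfl
  set E0 : ℝ := p * n + ∑ i, (1 - p) ^ (hopDeg G i + 1) with hE0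
  have hval : ∀ g : Fin n → Bool,
      ((Sg g).card : ℝ) + (Wg g).card =
        (∑ i, (if ∀ j ∈ ({i} : Finset (Fin n)), g j = true then (1:ℝ) else 0)) +
        ∑ i, (if ∀ j ∈ insert i (N2 G i), g j = false then (1:ℝ) else 0) := by
    intro g
    congr 1
    · rw [hSg]; rw [Finset.card_filter]; push_cast; rfl
    · rw [hWg]; rw [Finset.card_filter]; push_cast; rfl
  have hexp : ∑ g : Fin n → Bool,
      (∏ i, wgt p (g i)) * (((Sg g).card : ℝ) + (Wg g).card) = E0 := by
    calc ∑ g : Fin n → Bool, (∏ i, wgt p (g i)) * (((Sg g).card : ℝ) + (Wg g).card)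
        = ∑ g : Fin n → Bool,
            ((∑ i, (∏ k, wgt p (g k)) *
              (if ∀ j ∈ ({i} : Finset (Fin n)), g j = true then (1:ℝ) else 0)) +
             ∑ i, (∏ k, wgt p (g k)) *
              (if ∀ j ∈ insert i (N2 G i), g j = false then (1:ℝ) else 0)) := by
          refine Finset.sum_congr rfl fun g _ => ?_
          rw [hval g, mul_add, Finset.mul_sum, Finset.mul_sum]
      _ = (∑ g : Fin n → Bool, ∑ i, (∏ k, wgt p (g k)) *
              (if ∀ j ∈ ({i} : Finset (Fin n)), g j = true then (1:ℝ) else 0)) +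
          ∑ g : Fin n → Bool, ∑ i, (∏ k, wgt p (g k)) *
              (if ∀ j ∈ insert i (N2 G i), g j = false then (1:ℝ) else 0) :=
          Finset.sum_add_distrib
      _ = (∑ i, ∑ g : Fin n → Bool, (∏ k, wgt p (g k)) *
              (if ∀ j ∈ ({i} : Finset (Fin n)), g j = true then (1:ℝ) else 0)) +
          ∑ i, ∑ g : Fin n → Bool, (∏ k, wgt p (g k)) *
              (if ∀ j ∈ insert i (N2 G i), g j = false then (1:ℝ) else 0) := by
          congr 1 <;> exact Finset.sum_comm
      _ = (∑ _i : Fin n, (wgt p true) ^ (({_i} : Finset (Fin n)).card)) +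
          ∑ i, (wgt p false) ^ ((insert i (N2 G i)).card) := by
          congr 1 <;> exact Finset.sum_congr rfl fun i _ => exp_indicator p _ _
      _ = E0 := by
          rw [hE0]
          have e1 : (∑ _i : Fin n, (wgt p true) ^ (({_i} : Finset (Fin n)).card))
              = p * n := by
            simp [wgt, Finset.card_univ, mul_comm]
          have e2 : (∑ i, (wgt p false) ^ ((insert i (N2 G i)).card))
              = ∑ i, (1 - p) ^ (hopDeg G i + 1) :=
            Finset.sum_congr rfl fun i _ => by rw [hcardins i]; simp [wgt]
          rw [e1, e2]
  have htot : ∑ g : Fin n → Bool, ∏ i, wgt p (g i) = 1 := by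
    rw [sum_bool_prod]
    rw [Finset.prod_congr rfl (fun i _ => show wgt p true + wgt p false = 1 by
      simp [wgt])]
    exact Finset.prod_const_one
  have hwpos : ∀ g : Fin n → Bool, 0 < ∏ i, wgt p (g i) :=
    fun g => Finset.prod_pos fun i _ => wgt_pos hp0 hp1 _
  have hle : ∑ g : Fin n → Bool,
      (∏ i, wgt p (g i)) * (((Sg g).card : ℝ) + (Wg g).card)
        ≤ ∑ g : Fin n → Bool, (∏ i, wgt p (g i)) * E0 := by
    rw [hexp, ← Finset.sum_mul, htot, one_mul]
  obtain ⟨g, -, hg⟩ := Finset.exists_le_of_sum_le Finset.univ_nonempty hle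
  refine ⟨Sg g ∪ Wg g, hdom g, ?_⟩
  have h1 : (((Sg g ∪ Wg g).card : ℝ)) ≤ ((Sg g).card : ℝ) + (Wg g).card := by
    exact_mod_cast Finset.card_union_le _ _
  have h2 : ((Sg g).card : ℝ) + (Wg g).card ≤ E0 :=
    le_of_mul_le_mul_left hg (hwpos g)
  exact h1.trans h2

private lemma hopDomNum_le (G : SimpleGraph (Fin n)) (hδ : 1 ≤ minHopDeg G) :
    (hopDomNum G : ℝ) ≤
      (Real.log ((minHopDeg G : ℝ) + 1) + 1) / ((minHopDeg G : ℝ) + 1) * n := by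
  set d : ℕ := minHopDeg G with hd
  set m : ℝ := (d : ℝ) + 1 with hm
  have hd1 : (1 : ℝ) ≤ (d : ℝ) := by exact_mod_cast hδ
  have hm2 : (2:ℝ) ≤ m := by rw [hm]; linarith
  have hm0 : (0:ℝ) < m := by linarith
  have hm1 : (1:ℝ) < m := by linarith
  set p : ℝ := Real.log m / m with hp
  have hlogpos : 0 < Real.log m := Real.log_pos hm1
  have hp0 : 0 < p := div_pos hlogpos hm0
  have hp1 : p < 1 := by
    rw [hp, div_lt_one hm0]
    linarith [Real.log_le_sub_one_of_pos hm0]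
  obtain ⟨S, hS, hcard⟩ := exists_small_hopdom G hp0 hp1
  have hnum : hopDomNum G ≤ S.card := Nat.sInf_le ⟨S, hS, rfl⟩
  have hpm : p * m = Real.log m := div_mul_cancel₀ _ (ne_of_gt hm0)
  have hterm : ∀ i : Fin n, (1 - p) ^ (hopDeg G i + 1) ≤ 1 / m := by
    intro i
    have hdle : d ≤ hopDeg G i := ciInf_le (OrderBot.bddBelow _) i
    have h1 : (1 - p) ^ (hopDeg G i + 1) ≤ (1 - p) ^ (d + 1) :=
      pow_le_pow_of_le_one (by linarith) (by linarith) (by omega)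
    have h2 : (1 - p) ^ (d + 1) ≤ (Real.exp (-p)) ^ (d + 1) := by
      apply pow_le_pow_left₀ (by linarith)
      linarith [Real.add_one_le_exp (-p)]
    have h3 : (Real.exp (-p)) ^ (d + 1) = 1 / m := by
      rw [← Real.exp_nat_mul]
      have : ((d + 1 : ℕ) : ℝ) * (-p) = -(p * m) := by push_cast [hm]; ring
      rw [this, hpm, Real.exp_neg, Real.exp_log hm0, one_div]
    linarith
  have hsum : ∑ i : Fin n, (1 - p) ^ (hopDeg G i + 1) ≤ (n : ℝ) * (1 / m) := by
    calc ∑ i : Fin n, (1 - p) ^ (hopDeg G i + 1) ≤ ∑ _i : Fin n, 1 / m :=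
          Finset.sum_le_sum fun i _ => hterm i
      _ = (n : ℝ) * (1 / m) := by simp [Finset.card_univ, mul_comm]
  have hfin : p * n + (n : ℝ) * (1 / m) = (Real.log m + 1) / m * n := by
    field_simp [hp]
    linear_combination (n:ℝ) * hpm
  calc (hopDomNum G : ℝ) ≤ (S.card : ℝ) := by exact_mod_cast hnum
    _ ≤ p * n + ∑ i, (1 - p) ^ (hopDeg G i + 1) := hcard
    _ ≤ p * n + (n : ℝ) * (1 / m) := by linarith
    _ = (Real.log m + 1) / m * n := hfin

private lemma rh_matching_bound (G : SimpleGraph (Fin n)) :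
    rhDomNum G + 2 * matchingNum G ≤ 2 * hopDomNum G + n := by
  -- get a maximum matching
  have hbot : (⊥ : SimpleGraph.Subgraph G).IsMatching := by
    intro v hv
    simp [SimpleGraph.Subgraph.verts_bot] at hv
  have hne : (0 : ℕ) ∈ {k | ∃ M : SimpleGraph.Subgraph G,
      M.IsMatching ∧ M.edgeSet.ncard = k} := by
    refine ⟨⊥, hbot, ?_⟩
    rw [SimpleGraph.Subgraph.edgeSet_bot, Set.ncard_empty]
  have hbdd : BddAbove {k | ∃ M : SimpleGraph.Subgraph G,
      M.IsMatching ∧ M.edgeSet.ncard = k} := by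
    refine ⟨(Set.univ : Set (Sym2 (Fin n))).ncard, ?_⟩
    rintro k ⟨M, -, rfl⟩
    exact Set.ncard_le_ncard (Set.subset_univ _) Set.finite_univ
  obtain ⟨M, hM, hMcard⟩ : matchingNum G ∈ {k | ∃ M : SimpleGraph.Subgraph G,
      M.IsMatching ∧ M.edgeSet.ncard = k} := Nat.sSup_mem ⟨0, hne⟩ hbdd
  -- get a minimum hop dominating set
  obtain ⟨S, hS, hScard⟩ : hopDomNum G ∈ {k | ∃ S : Finset (Fin n),
      IsHopDomSet G S ∧ S.card = k} :=
    Nat.sInf_mem ⟨Finset.univ.card, Finset.univ,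
      fun u hu => absurd (Finset.mem_univ u) hu, rfl⟩
  -- partner function
  set pt : Fin n → Fin n := fun v => if h : v ∈ M.verts then (hM h).choose else v with hptdef
  have hadj : ∀ v ∈ M.verts, M.Adj v (pt v) := by
    intro v hv
    simp only [hptdef, dif_pos hv]
    exact (hM hv).choose_spec.1
  have huniq : ∀ v ∈ M.verts, ∀ w, M.Adj v w → w = pt v := by
    intro v hv w hw
    simp only [hptdef, dif_pos hv]
    exact (hM hv).choose_spec.2 w hw
  have hinv : ∀ v ∈ M.verts, pt (pt v) = v := by
    intro v hv
    have h1 := hadj v hv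
    have hv' : pt v ∈ M.verts := M.edge_vert h1.symm
    exact (huniq _ hv' v h1.symm).symm
  set Vm : Finset (Fin n) := (M.verts.toFinite).toFinset with hVmdef
  set Ef : Finset (Sym2 (Fin n)) := (M.edgeSet.toFinite).toFinset with hEfdef
  have hEfcard : Ef.card = matchingNum G := by
    rw [hEfdef, ← Set.ncard_eq_toFinset_card _ (M.edgeSet.toFinite), hMcard]
  -- 2 * matchingNum ≤ Vm.card
  have hmain : 2 * Ef.card ≤ Vm.card := by
    apply Finset.mul_card_image_le_card_of_maps_to
      (f := fun v => s(v, pt v))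
    · intro v hv
      rw [hEfdef, Set.Finite.mem_toFinset]
      exact SimpleGraph.Subgraph.mem_edgeSet.mpr
        (hadj v ((Set.Finite.mem_toFinset _).mp hv))
    · intro e he
      induction e using Sym2.ind with
      | _ a b =>
        have hab : M.Adj a b := SimpleGraph.Subgraph.mem_edgeSet.mp
          ((Set.Finite.mem_toFinset _).mp he)
        have hane : a ≠ b := hab.ne
        have ha : a ∈ M.verts := M.edge_vert hab
        have hb : b ∈ M.verts := M.edge_vert hab.symm
        have hpa : pt a = b := (huniq a ha b hab).symm
        have hpb : pt b = a := (huniq b hb a hab.symm).symm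
        have hsub : ({a, b} : Finset (Fin n)) ⊆
            {v ∈ Vm | s(v, pt v) = s(a, b)} := by
          intro x hx
          rcases Finset.mem_insert.mp hx with rfl | hx
          · refine Finset.mem_filter.mpr ⟨(Set.Finite.mem_toFinset _).mpr ha, ?_⟩
            rw [hpa]
          · rw [Finset.mem_singleton] at hx
            subst hx
            refine Finset.mem_filter.mpr ⟨(Set.Finite.mem_toFinset _).mpr hb, ?_⟩
            rw [hpb, Sym2.eq_swap]
        calc 2 = ({a, b} : Finset (Fin n)).card := (Finset.card_pair hane).symm
          _ ≤ _ := Finset.card_le_card hsub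
  -- the restrained hop dominating set
  set P : Finset (Fin n) := Vm.filter (fun v => pt v ∈ S) with hPdef
  set D : Finset (Fin n) := S ∪ (Finset.univ \ Vm) ∪ P with hDdef
  have hmemS : ∀ x ∈ S, x ∈ D := fun x hx =>
    Finset.mem_union_left _ (Finset.mem_union_left _ hx)
  have hDres : IsRestrainedHopDomSet G D := by
    constructor
    · intro u hu
      have huS : u ∉ S := fun h => hu (hmemS u h)
      obtain ⟨v, hv, hdist⟩ := hS u huS
      exact ⟨v, hmemS v hv, hdist⟩
    · intro u hu
      have huS : u ∉ S := fun h => hu (hmemS u h)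
      have huZ : u ∉ Finset.univ \ Vm := fun h =>
        hu (Finset.mem_union_left _ (Finset.mem_union_right _ h))
      have huP : u ∉ P := fun h => hu (Finset.mem_union_right _ h)
      have huVm : u ∈ Vm := by
        by_contra h
        exact huZ (Finset.mem_sdiff.mpr ⟨Finset.mem_univ u, h⟩)
      have huM : u ∈ M.verts := (Set.Finite.mem_toFinset _).mp huVm
      have hptS : pt u ∉ S := fun h =>
        huP (Finset.mem_filter.mpr ⟨huVm, h⟩)
      refine ⟨pt u, ?_, M.adj_sub (hadj u huM)⟩
      have hptM : pt u ∈ M.verts := M.edge_vert (hadj u huM).symm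
      have hptVm : pt u ∈ Vm := (Set.Finite.mem_toFinset _).mpr hptM
      intro hmem
      rcases Finset.mem_union.mp hmem with hmem | hmem
      · rcases Finset.mem_union.mp hmem with hmem | hmem
        · exact hptS hmem
        · exact (Finset.mem_sdiff.mp hmem).2 hptVm
      · have := (Finset.mem_filter.mp hmem).2
        rw [hinv u huM] at this
        exact huS this
  have hrh : rhDomNum G ≤ D.card := Nat.sInf_le ⟨D, hDres, rfl⟩
  have hDcard : D.card ≤ S.card + (n - Vm.card) + P.card := by
    calc D.card ≤ (S ∪ (Finset.univ \ Vm)).card + P.card := Finset.card_union_le _ _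
      _ ≤ S.card + (Finset.univ \ Vm).card + P.card := by
          gcongr
          exact Finset.card_union_le _ _
      _ = S.card + (n - Vm.card) + P.card := by
          rw [Finset.card_sdiff_of_subset (Finset.subset_univ _), Finset.card_univ,
            Fintype.card_fin]
  have hPcard : P.card ≤ S.card := by
    apply Finset.card_le_card_of_injOn pt
    · intro v hv
      exact (Finset.mem_filter.mp hv).2
    · intro v hv w hw h
      have hvM : v ∈ M.verts := (Set.Finite.mem_toFinset _).mp (Finset.mem_filter.mp hv).1
      have hwM : w ∈ M.verts := (Set.Finite.mem_toFinset _).mp (Finset.mem_filter.mp hw).1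
      calc v = pt (pt v) := (hinv v hvM).symm
        _ = pt (pt w) := by rw [h]
        _ = w := hinv w hwM
  have hVmn : Vm.card ≤ n := by
    calc Vm.card ≤ Finset.univ.card := Finset.card_le_univ _
      _ = n := by rw [Finset.card_univ, Fintype.card_fin]
  omega

end AuxProofs

theorem stmt3 {n : ℕ} (G : SimpleGraph (Fin n)) (hδh : 1 ≤ minHopDeg G)
    (hν : hopDomNum G ≤ matchingNum G) :
    (rhDomNum G : ℝ) ≤
      (2 * Real.log (minHopDeg G + 1) + minHopDeg G + 3) / (minHopDeg G + 1) * n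
        - 2 * matchingNum G := by
  have hA := rh_matching_bound G
  have hB := hopDomNum_le G hδh
  have hA' : (rhDomNum G : ℝ) + 2 * matchingNum G ≤ 2 * hopDomNum G + n := by
    exact_mod_cast hA
  have hm0 : (0:ℝ) < (minHopDeg G : ℝ) + 1 := by positivity
  have key : (2 * Real.log ((minHopDeg G : ℝ) + 1) + (minHopDeg G : ℝ) + 3) /
        ((minHopDeg G : ℝ) + 1) * n =
      2 * ((Real.log ((minHopDeg G : ℝ) + 1) + 1) / ((minHopDeg G : ℝ) + 1) * n) + n := by
    field_simp
    ring
  linarith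
end
end

section
/- If G is a graph of order n with δ_h(G) ≥ 1 and matching number ν(G) ≥ γ_h(G), then γ_{trh}(G) ≤ ((2 ln δ_h + δ_h + 2)/δ_h) · n − 2ν(G). -/
open Finset

noncomputable section
open scoped Classical

variable {n : ℕ}

open scoped Classical

-- weight sum = 1
lemma sum_weight {α : Type*} (p : ℝ) (s : Finset α) :
    ∑ t ∈ s.powerset, p ^ t.card * (1 - p) ^ (s.card - t.card) = 1 := by
  have h := Finset.prod_add (fun _ : α => p) (fun _ => (1 - p)) s
  simp only [prod_const] at h
  have : ∀ t ∈ s.powerset, p ^ t.card * (1-p) ^ ((s \ t).card)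
      = p ^ t.card * (1 - p) ^ (s.card - t.card) := by
    intro t ht
    rw [card_sdiff_of_subset (mem_powerset.mp ht)]
  rw [Finset.sum_congr rfl this] at h
  rw [← h]
  simp

-- sum over disjoint subsets
lemma sum_weight_disj {α : Type*} [Fintype α] [DecidableEq α] (p : ℝ) (A : Finset α) :
    ∑ t ∈ (Finset.univ : Finset α).powerset, (if t ∩ A = ∅ then p ^ t.card * (1 - p) ^ (Fintype.card α - t.card) else 0)
      = (1 - p) ^ A.card := by
  rw [Finset.sum_ite, Finset.sum_const, smul_zero, add_zero]
  have hfil : (Finset.univ : Finset α).powerset.filter (fun t => t ∩ A = ∅)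
      = (Finset.univ \ A).powerset := by
    ext t
    simp [Finset.subset_sdiff, ← Finset.disjoint_iff_inter_eq_empty, disjoint_comm]
  rw [hfil]
  have h2 := sum_weight p (Finset.univ \ A)
  have hc : (Finset.univ \ A).card = Fintype.card α - A.card := by
    rw [card_sdiff_of_subset (subset_univ A), card_univ]
  rw [hc] at h2
  calc ∑ t ∈ (Finset.univ \ A).powerset, p ^ t.card * (1 - p) ^ (Fintype.card α - t.card)
      = ∑ t ∈ (Finset.univ \ A).powerset, (1 - p) ^ A.card * (p ^ t.card * (1 - p) ^ (Fintype.card α - A.card - t.card)) := by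
        apply Finset.sum_congr rfl
        intro t ht
        have htc : t.card ≤ Fintype.card α - A.card := by
          have := Finset.card_le_card (mem_powerset.mp ht)
          omega
        have hac : A.card ≤ Fintype.card α := by
          simpa using Finset.card_le_card (subset_univ A)
        rw [← mul_assoc, mul_comm ((1-p)^A.card) (p ^ t.card), mul_assoc, ← pow_add]
        congr 2
        omega
    _ = (1 - p) ^ A.card := by rw [← Finset.mul_sum, h2, mul_one]

lemma sum_weight_card {α : Type*} [Fintype α] (p : ℝ) :
    ∑ t ∈ (Finset.univ : Finset α).powerset, (p ^ t.card * (1 - p) ^ (Fintype.card α - t.card)) * (t.card : ℝ)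
      = p * Fintype.card α := by
  have key : ∀ i : α, ∑ t ∈ (Finset.univ : Finset α).powerset,
      (p ^ t.card * (1 - p) ^ (Fintype.card α - t.card)) * (if i ∈ t then (1:ℝ) else 0) = p := by
    intro i
    have h1 := sum_weight p (Finset.univ : Finset α)
    rw [Finset.card_univ] at h1
    have h2 := sum_weight_disj p ({i} : Finset α)
    simp only [Finset.card_singleton, pow_one] at h2
    have hsplit : ∀ t : Finset α, (p ^ t.card * (1 - p) ^ (Fintype.card α - t.card)) * (if i ∈ t then (1:ℝ) else 0)
        = p ^ t.card * (1 - p) ^ (Fintype.card α - t.card)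
          - (if t ∩ {i} = ∅ then p ^ t.card * (1 - p) ^ (Fintype.card α - t.card) else 0) := by
      intro t
      have : t ∩ {i} = ∅ ↔ i ∉ t := by
        simp [Finset.eq_empty_iff_forall_notMem]
      by_cases hi : i ∈ t <;> simp [this, hi]
    rw [Finset.sum_congr rfl (fun t _ => hsplit t), Finset.sum_sub_distrib, h1, h2]
    ring
  calc ∑ t ∈ (Finset.univ : Finset α).powerset, (p ^ t.card * (1 - p) ^ (Fintype.card α - t.card)) * (t.card : ℝ)
      = ∑ t ∈ (Finset.univ : Finset α).powerset, ∑ i : α,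
          (p ^ t.card * (1 - p) ^ (Fintype.card α - t.card)) * (if i ∈ t then (1:ℝ) else 0) := by
        apply Finset.sum_congr rfl; intro t _
        rw [← Finset.mul_sum]
        congr 1
        rw [Finset.sum_ite_mem, Finset.univ_inter, Finset.sum_const, nsmul_eq_mul, mul_one]
    _ = ∑ i : α, ∑ t ∈ (Finset.univ : Finset α).powerset,
          (p ^ t.card * (1 - p) ^ (Fintype.card α - t.card)) * (if i ∈ t then (1:ℝ) else 0) := Finset.sum_comm
    _ = ∑ i : α, p := by exact Finset.sum_congr rfl (fun i _ => key i)
    _ = p * Fintype.card α := by simp [mul_comm]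

lemma exists_le_expectation {α : Type*} {s : Finset (Finset α)} (hs : s.Nonempty)
    (w g : Finset α → ℝ) (hw : ∀ t ∈ s, 0 ≤ w t) (hw1 : ∑ t ∈ s, w t = 1) :
    ∃ t ∈ s, g t ≤ ∑ t ∈ s, w t * g t := by
  obtain ⟨t0, ht0, hmin⟩ := Finset.exists_min_image s g hs
  refine ⟨t0, ht0, ?_⟩
  calc g t0 = (∑ t ∈ s, w t) * g t0 := by rw [hw1, one_mul]
    _ = ∑ t ∈ s, w t * g t0 := by rw [Finset.sum_mul]
    _ ≤ ∑ t ∈ s, w t * g t := by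
        apply Finset.sum_le_sum
        intro t ht
        exact mul_le_mul_of_nonneg_left (hmin t ht) (hw t ht)

lemma minHopDeg_le {n : ℕ} [NeZero n] (G : SimpleGraph (Fin n)) (v : Fin n) :
    minHopDeg G ≤ (N2 G v).card := by
  have : Nonempty (Fin n) := ⟨⟨0, Nat.pos_of_ne_zero (NeZero.ne n)⟩⟩
  exact ciInf_le (OrderBot.bddBelow _) v

lemma exists_twoStepDom {n : ℕ} (G : SimpleGraph (Fin n)) (hδ : 1 ≤ minHopDeg G) :
    ∃ D : Finset (Fin n), IsTwoStepDomSet G D ∧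
      (D.card : ℝ) ≤ (Real.log (minHopDeg G) + 1) / (minHopDeg G) * n := by
  rcases Nat.eq_zero_or_pos n with hn | hn
  · subst hn
    refine ⟨∅, fun u => absurd u.2 (by omega), by simp⟩
  have : NeZero n := ⟨hn.ne'⟩
  set δ : ℕ := minHopDeg G with hδdef
  have hδv : ∀ v, δ ≤ (N2 G v).card := fun v => minHopDeg_le G v
  have hδR : (1:ℝ) ≤ (δ:ℝ) := by exact_mod_cast hδ
  have hδpos : (0:ℝ) < (δ:ℝ) := by linarith
  set p : ℝ := Real.log δ / δ with hpdef
  have hlognn : 0 ≤ Real.log δ := Real.log_nonneg hδR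
  have hp0 : 0 ≤ p := div_nonneg hlognn (le_of_lt hδpos)
  have hp1 : p ≤ 1 := by
    rw [hpdef, div_le_one hδpos]
    have := Real.log_le_sub_one_of_pos hδpos
    linarith
  have h1p0 : 0 ≤ 1 - p := by linarith
  set w : Finset (Fin n) → ℝ := fun t => p ^ t.card * (1 - p) ^ (n - t.card) with hwdef
  set g : Finset (Fin n) → ℝ :=
    fun t => (t.card : ℝ) + ((Finset.univ.filter (fun v => N2 G v ∩ t = ∅)).card : ℝ) with hgdef
  have hcardα : Fintype.card (Fin n) = n := Fintype.card_fin n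
  have hw1 : ∑ t ∈ (Finset.univ : Finset (Fin n)).powerset, w t = 1 := by
    have := sum_weight p (Finset.univ : Finset (Fin n))
    rwa [Finset.card_univ, hcardα] at this
  have hwnn : ∀ t ∈ (Finset.univ : Finset (Fin n)).powerset, 0 ≤ w t :=
    fun t _ => mul_nonneg (pow_nonneg hp0 _) (pow_nonneg h1p0 _)
  -- expectation bound
  have hE : ∑ t ∈ (Finset.univ : Finset (Fin n)).powerset, w t * g t
      ≤ p * n + n * (1 - p) ^ δ := by
    have hsplit : ∑ t ∈ (Finset.univ : Finset (Fin n)).powerset, w t * g t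
        = (∑ t ∈ (Finset.univ : Finset (Fin n)).powerset, w t * (t.card : ℝ))
          + ∑ t ∈ (Finset.univ : Finset (Fin n)).powerset,
              w t * ((Finset.univ.filter (fun v => N2 G v ∩ t = ∅)).card : ℝ) := by
      rw [← Finset.sum_add_distrib]
      exact Finset.sum_congr rfl (fun t _ => by rw [hgdef]; ring)
    have h1 : ∑ t ∈ (Finset.univ : Finset (Fin n)).powerset, w t * (t.card : ℝ) = p * n := by
      have := sum_weight_card (α := Fin n) p
      rw [hcardα] at this
      rw [← this]
    have h2 : ∑ t ∈ (Finset.univ : Finset (Fin n)).powerset,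
        w t * ((Finset.univ.filter (fun v => N2 G v ∩ t = ∅)).card : ℝ)
        ≤ n * (1 - p) ^ δ := by
      have hswap : ∑ t ∈ (Finset.univ : Finset (Fin n)).powerset,
          w t * ((Finset.univ.filter (fun v => N2 G v ∩ t = ∅)).card : ℝ)
          = ∑ v : Fin n, ∑ t ∈ (Finset.univ : Finset (Fin n)).powerset,
              (if t ∩ N2 G v = ∅ then w t else 0) := by
        rw [Finset.sum_comm]
        apply Finset.sum_congr rfl
        intro t _
        rw [Finset.sum_ite, Finset.sum_const, Finset.sum_const, smul_zero, add_zero,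
          nsmul_eq_mul, mul_comm]
        have hfeq : Finset.filter (fun v => N2 G v ∩ t = ∅) (Finset.univ : Finset (Fin n))
            = Finset.filter (fun x => t ∩ N2 G x = ∅) Finset.univ := by
          apply Finset.filter_congr
          intro v _
          rw [Finset.inter_comm]
        rw [hfeq]
      rw [hswap]
      have hbound : ∀ v : Fin n, ∑ t ∈ (Finset.univ : Finset (Fin n)).powerset,
          (if t ∩ N2 G v = ∅ then w t else 0) ≤ (1 - p) ^ δ := by
        intro v
        have := sum_weight_disj p (N2 G v)
        rw [hcardα] at this
        exact le_of_eq_of_le this (pow_le_pow_of_le_one h1p0 (by linarith) (hδv v))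
      calc ∑ v : Fin n, ∑ t ∈ (Finset.univ : Finset (Fin n)).powerset,
            (if t ∩ N2 G v = ∅ then w t else 0)
          ≤ ∑ _v : Fin n, (1 - p) ^ δ := Finset.sum_le_sum (fun v _ => hbound v)
        _ = n * (1 - p) ^ δ := by simp [mul_comm]
    rw [hsplit, h1]
    linarith
  obtain ⟨t, _, hts⟩ := exists_le_expectation
    ⟨∅, Finset.empty_mem_powerset _⟩ w g hwnn hw1
  -- build the dominating set
  have hne : ∀ v : Fin n, (N2 G v).Nonempty := by
    intro v
    rw [← Finset.card_pos]
    exact lt_of_lt_of_le hδ (hδv v)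
  set rep : Fin n → Fin n := fun v => (hne v).choose with hrepdef
  have hrep : ∀ v, rep v ∈ N2 G v := fun v => (hne v).choose_spec
  set bad := Finset.univ.filter (fun v => N2 G v ∩ t = ∅) with hbaddef
  refine ⟨t ∪ bad.image rep, ?_, ?_⟩
  · intro u
    by_cases hu : N2 G u ∩ t = ∅
    · refine ⟨rep u, ?_, ?_⟩
      · apply Finset.mem_union_right
        exact Finset.mem_image_of_mem rep (by simp [hbaddef, hu])
      · have := hrep u
        simp only [N2, Finset.mem_filter] at this
        exact this.2
    · obtain ⟨v, hv⟩ := Finset.nonempty_iff_ne_empty.mpr hu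
      rw [Finset.mem_inter] at hv
      refine ⟨v, Finset.mem_union_left _ hv.2, ?_⟩
      have := hv.1
      simp only [N2, Finset.mem_filter] at this
      exact this.2
  · have hcard : ((t ∪ bad.image rep).card : ℝ) ≤ g t := by
      rw [hgdef]
      have := Finset.card_union_le t (bad.image rep)
      have h2 := Finset.card_image_le (f := rep) (s := bad)
      push_cast
      have : (t ∪ bad.image rep).card ≤ t.card + bad.card := le_trans this (by omega)
      exact_mod_cast le_trans (Nat.cast_le.mpr this) (by norm_num [hbaddef])
    have hfinal : p * n + n * (1 - p) ^ δ ≤ (Real.log δ + 1) / δ * n := by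
      have hpow : (1 - p) ^ δ ≤ 1 / (δ:ℝ) := by
        have he : 1 - p ≤ Real.exp (-p) := by
          have := Real.add_one_le_exp (-p)
          linarith
        have h1 : (1 - p) ^ δ ≤ Real.exp (-p) ^ δ := pow_le_pow_left₀ h1p0 he δ
        have h2 : Real.exp (-p) ^ δ = Real.exp (-(p * δ)) := by
          rw [← Real.exp_nat_mul]
          ring_nf
        have h3 : p * δ = Real.log δ := div_mul_cancel₀ _ (ne_of_gt hδpos)
        rw [h2, h3, Real.exp_neg, Real.exp_log hδpos] at h1
        rw [one_div]
        exact h1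
      have : n * (1 - p) ^ δ ≤ n * (1 / (δ:ℝ)) :=
        mul_le_mul_of_nonneg_left hpow (by positivity)
      have heq : p * n + n * (1 / (δ:ℝ)) = (Real.log δ + 1) / δ * n := by
        rw [hpdef]; field_simp
      linarith
    calc ((t ∪ bad.image rep).card : ℝ) ≤ g t := hcard
      _ ≤ p * n + n * (1 - p) ^ δ := le_trans hts hE
      _ ≤ (Real.log δ + 1) / δ * n := hfinal

lemma matchingNum_spec {n : ℕ} (G : SimpleGraph (Fin n)) :
    ∃ M : SimpleGraph.Subgraph G, M.IsMatching ∧ M.edgeSet.ncard = matchingNum G := by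
  have hne : {k | ∃ M : SimpleGraph.Subgraph G, M.IsMatching ∧ M.edgeSet.ncard = k}.Nonempty := by
    refine ⟨0, ⊥, ?_, ?_⟩
    · intro v hv
      simp [SimpleGraph.Subgraph.verts_bot] at hv
    · simp [SimpleGraph.Subgraph.edgeSet_bot]
  have hbdd : BddAbove {k | ∃ M : SimpleGraph.Subgraph G, M.IsMatching ∧ M.edgeSet.ncard = k} := by
    refine ⟨Nat.card (Sym2 (Fin n)), ?_⟩
    rintro k ⟨M, _, rfl⟩
    calc M.edgeSet.ncard ≤ (Set.univ : Set (Sym2 (Fin n))).ncard :=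
          Set.ncard_le_ncard (Set.subset_univ _) Set.finite_univ
      _ = Nat.card (Sym2 (Fin n)) := Set.ncard_univ _
  have := Nat.sSup_mem hne hbdd
  exact this

lemma stmt4_aux {n : ℕ} (G : SimpleGraph (Fin n)) (M : SimpleGraph.Subgraph G)
    (hM : M.IsMatching) (D : Finset (Fin n)) (hD : IsTwoStepDomSet G D) :
    ∃ S : Finset (Fin n), IsTotalRestrainedHopDomSet G S ∧
      (S.card : ℝ) ≤ n - 2 * M.edgeSet.ncard + 2 * D.card := by
  -- the partner function
  have hPex : ∀ v ∈ M.verts, ∃ w, M.Adj v w := fun v hv => (hM hv).exists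
  set P : Fin n → Fin n := fun v =>
    if h : v ∈ M.verts then (hPex v h).choose else v with hPdef
  have hPadj : ∀ v (hv : v ∈ M.verts), M.Adj v (P v) := by
    intro v hv
    simp only [hPdef, dif_pos hv]
    exact (hPex v hv).choose_spec
  have huniq : ∀ v (hv : v ∈ M.verts) w, M.Adj v w → w = P v := by
    intro v hv w hw
    exact (hM hv).unique hw (hPadj v hv)
  have hPverts : ∀ v, v ∈ M.verts → P v ∈ M.verts :=
    fun v hv => M.edge_vert (hPadj v hv).symm
  have hPP : ∀ v, v ∈ M.verts → P (P v) = v := by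
    intro v hv
    exact (huniq (P v) (hPverts v hv) v (hPadj v hv).symm).symm
  have hPne : ∀ v, v ∈ M.verts → P v ≠ v := by
    intro v hv
    exact fun h => (M.adj_sub (hPadj v hv)).ne' (by rw [h])
  -- B : unmatched-by-D vertices
  set B : Finset (Fin n) :=
    Finset.univ.filter (fun v => v ∈ M.verts ∧ v ∉ D ∧ P v ∉ D) with hBdef
  have hBmem : ∀ v, v ∈ B ↔ (v ∈ M.verts ∧ v ∉ D ∧ P v ∉ D) := by
    intro v; simp [hBdef]
  have hPB : ∀ v ∈ B, P v ∈ B := by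
    intro v hv
    rw [hBmem] at hv ⊢
    exact ⟨hPverts v hv.1, hv.2.2, by rw [hPP v hv.1]; exact hv.2.1⟩
  -- vertex set of M as a finset
  set Vt : Finset (Fin n) := Finset.univ.filter (fun v => v ∈ M.verts) with hVtdef
  -- edges as a finset
  set E : Finset (Sym2 (Fin n)) := (Set.toFinite M.edgeSet).toFinset with hEdef
  have hEcard : E.card = M.edgeSet.ncard := (Set.ncard_eq_toFinset_card _ _).symm
  -- injection of endpoint pairs
  have hexy : ∀ e ∈ E, ∃ x y, e = s(x, y) ∧ M.Adj x y := by
    intro e he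
    rw [hEdef, Set.Finite.mem_toFinset] at he
    induction e with
    | h x y => exact ⟨x, y, rfl, he⟩
  -- key: 2 * |E| ≤ |Vt|  via biUnion of endpoints
  have hkey : 2 * E.card ≤ Vt.card := by
    classical
    choose x y hxy hadj using hexy
    have hdisj : ∀ e₁ (h₁ : e₁ ∈ E), ∀ e₂ (h₂ : e₂ ∈ E), e₁ ≠ e₂ →
        Disjoint ({x e₁ h₁, y e₁ h₁} : Finset (Fin n)) {x e₂ h₂, y e₂ h₂} := by
      intro e₁ h₁ e₂ h₂ hne
      rw [Finset.disjoint_left]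
      intro v hv₁ hv₂
      apply hne
      have hform : ∀ e (he : e ∈ E), v ∈ ({x e he, y e he} : Finset (Fin n)) → e = s(v, P v) := by
        intro e he hv
        rw [Finset.mem_insert, Finset.mem_singleton] at hv
        rcases hv with rfl | rfl
        · exact (hxy e he).trans
            (by rw [huniq _ (M.edge_vert (hadj e he)) _ (hadj e he)])
        · exact (hxy e he).trans
            (by rw [huniq _ (M.edge_vert (hadj e he).symm) _ (hadj e he).symm, Sym2.eq_swap])
      rw [hform e₁ h₁ hv₁, hform e₂ h₂ hv₂]
    have hsub : E.attach.biUnion (fun e => ({x e.1 e.2, y e.1 e.2} : Finset (Fin n))) ⊆ Vt := by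
      intro v hv
      rw [Finset.mem_biUnion] at hv
      obtain ⟨e, he, hv⟩ := hv
      rw [Finset.mem_insert, Finset.mem_singleton] at hv
      rw [hVtdef, Finset.mem_filter]
      refine ⟨Finset.mem_univ _, ?_⟩
      rcases hv with rfl | rfl
      · exact M.edge_vert (hadj e.1 e.2)
      · exact M.edge_vert (hadj e.1 e.2).symm
    have hcard : (E.attach.biUnion (fun e => ({x e.1 e.2, y e.1 e.2} : Finset (Fin n)))).card
        = 2 * E.card := by
      rw [Finset.card_biUnion]
      · rw [Finset.sum_congr rfl (fun e _ => ?h), Finset.sum_const, Finset.card_attach,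
          smul_eq_mul, mul_comm]
        case h =>
          rw [Finset.card_insert_of_notMem, Finset.card_singleton]
          rw [Finset.mem_singleton]
          exact fun hcontra => (M.adj_sub (hadj e.1 e.2)).ne hcontra
      · intro e₁ _ e₂ _ hne
        apply hdisj e₁.1 e₁.2 e₂.1 e₂.2
        exact fun h => hne (Subtype.ext h)
    calc 2 * E.card = _ := hcard.symm
      _ ≤ Vt.card := Finset.card_le_card hsub
  -- Vt.card ≤ B.card + 2 * D.card
  have hVtB : Vt.card ≤ B.card + 2 * D.card := by
    have hsub : Vt ⊆ B ∪ (D ∪ D.image P) := by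
      intro v hv
      rw [hVtdef, Finset.mem_filter] at hv
      by_cases h1 : v ∈ D
      · exact Finset.mem_union_right _ (Finset.mem_union_left _ h1)
      by_cases h2 : P v ∈ D
      · refine Finset.mem_union_right _ (Finset.mem_union_right _ ?_)
        rw [Finset.mem_image]
        exact ⟨P v, h2, hPP v hv.2⟩
      · exact Finset.mem_union_left _ ((hBmem v).mpr ⟨hv.2, h1, h2⟩)
    calc Vt.card ≤ (B ∪ (D ∪ D.image P)).card := Finset.card_le_card hsub
      _ ≤ B.card + (D ∪ D.image P).card := Finset.card_union_le _ _
      _ ≤ B.card + (D.card + (D.image P).card) :=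
          Nat.add_le_add_left (Finset.card_union_le _ _) _
      _ ≤ B.card + 2 * D.card := by
          have := Finset.card_image_le (f := P) (s := D)
          omega
  -- the set S
  refine ⟨Finset.univ \ B, ⟨?_, ?_⟩, ?_⟩
  · intro u
    obtain ⟨v, hvD, hdist⟩ := hD u
    refine ⟨v, ?_, hdist⟩
    rw [Finset.mem_sdiff]
    refine ⟨Finset.mem_univ _, fun hvB => ?_⟩
    exact ((hBmem v).mp hvB).2.1 hvD
  · intro u hu
    rw [Finset.mem_sdiff, not_and, not_not] at hu
    have huB := hu (Finset.mem_univ u)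
    refine ⟨P u, ?_, ?_⟩
    · rw [Finset.mem_sdiff, not_and, not_not]
      exact fun _ => hPB u huB
    · exact M.adj_sub (hPadj u ((hBmem u).mp huB).1)
  · have hBn : B.card ≤ n := by
      calc B.card ≤ (Finset.univ : Finset (Fin n)).card := Finset.card_le_card (Finset.subset_univ _)
        _ = n := by simp
    have hcards : (Finset.univ \ B).card = n - B.card := by
      rw [Finset.card_sdiff_of_subset (Finset.subset_univ _), Finset.card_univ, Fintype.card_fin]
    have h2 : 2 * M.edgeSet.ncard ≤ B.card + 2 * D.card := by
      rw [← hEcard]; omega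
    rw [hcards]
    have : ((n - B.card : ℕ) : ℝ) = (n : ℝ) - B.card := by
      push_cast [hBn]; ring
    rw [this]
    have h2R : (2 : ℝ) * M.edgeSet.ncard ≤ (B.card : ℝ) + 2 * D.card := by exact_mod_cast h2
    linarith

theorem stmt4 {n : ℕ} (G : SimpleGraph (Fin n)) (hδh : 1 ≤ minHopDeg G)
    (hν : hopDomNum G ≤ matchingNum G) :
    (trhDomNum G : ℝ) ≤
      (2 * Real.log (minHopDeg G) + minHopDeg G + 2) / (minHopDeg G) * n
        - 2 * matchingNum G := by
  obtain ⟨M, hM, hMcard⟩ := matchingNum_spec G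
  obtain ⟨D, hDdom, hDcard⟩ := exists_twoStepDom G hδh
  obtain ⟨S, hS, hScard⟩ := stmt4_aux G M hM D hDdom
  have htrh0 : trhDomNum G ≤ S.card := Nat.sInf_le ⟨S, hS, rfl⟩
  have htrh : (trhDomNum G : ℝ) ≤ (S.card : ℝ) := by exact_mod_cast htrh0
  have hδR : (1:ℝ) ≤ (minHopDeg G : ℝ) := by exact_mod_cast hδh
  have hδpos : (0:ℝ) < (minHopDeg G : ℝ) := by linarith
  rw [hMcard] at hScard
  have heq : (n:ℝ) + 2 * ((Real.log (minHopDeg G) + 1) / (minHopDeg G) * n)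
      = (2 * Real.log (minHopDeg G) + minHopDeg G + 2) / (minHopDeg G) * n := by
    field_simp
    ring
  linarith
end
end

section
/- If a graph G of order n has a near-perfect matching (a matching leaving exactly one vertex unmatched) and ν(G) ≥ γ_h(G), then γ_{rh}(G) ≤ 2n·(ln(δ_h + 1) + 1)/(δ_h + 1) + 1. -/
open Finset

noncomputable section
open scoped Classical

variable {n : ℕ}

-- auxiliary lemmas
lemma sum_bern {m : ℕ} (s : Finset (Fin m)) (p : ℝ) :
    ∑ t ∈ s.powerset, p ^ t.card * (1 - p) ^ (s.card - t.card) = 1 := by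
  have h := Finset.prod_add (fun _ : Fin m => p) (fun _ : Fin m => (1 - p)) s
  simp only [add_sub_cancel, Finset.prod_const, Finset.prod_const_one] at h
  rw [Finset.sum_congr rfl (fun t ht => ?_)] at h
  · rw [← h]; simp
  · rw [Finset.card_sdiff_of_subset (Finset.mem_powerset.mp ht)]

lemma sum_bern_disj {m : ℕ} (A : Finset (Fin m)) (p : ℝ) :
    ∑ t ∈ Aᶜ.powerset, p ^ t.card * (1 - p) ^ (m - t.card) = (1 - p) ^ A.card := by
  have key := sum_bern Aᶜ p
  have hc : Aᶜ.card = m - A.card := by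
    rw [Finset.card_compl]; simp
  calc ∑ t ∈ Aᶜ.powerset, p ^ t.card * (1 - p) ^ (m - t.card)
      = ∑ t ∈ Aᶜ.powerset, (1 - p) ^ A.card * (p ^ t.card * (1 - p) ^ (Aᶜ.card - t.card)) := by
        refine Finset.sum_congr rfl (fun t ht => ?_)
        have htA : t.card ≤ Aᶜ.card := Finset.card_le_card (Finset.mem_powerset.mp ht)
        have hA : A.card ≤ m := Finset.card_le_card (Finset.subset_univ A) |>.trans (by simp)
        have : m - t.card = A.card + (Aᶜ.card - t.card) := by omega
        rw [this, pow_add]; ring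
    _ = (1 - p) ^ A.card := by rw [← Finset.mul_sum, key, mul_one]

lemma filter_powerset_eq {m : ℕ} (A : Finset (Fin m)) :
    ((Finset.univ : Finset (Fin m)).powerset.filter (fun S => S ∩ A = ∅)) = Aᶜ.powerset := by
  ext S
  simp only [Finset.mem_filter, Finset.mem_powerset, Finset.subset_univ, true_and]
  rw [← Finset.disjoint_iff_inter_eq_empty]
  constructor
  · intro h x hx
    simp only [Finset.mem_compl]
    exact fun hA => (Finset.disjoint_left.mp h hx) hA
  · intro h
    rw [Finset.disjoint_left]
    intro x hx hA
    exact (Finset.mem_compl.mp (h hx)) hA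

lemma sum_bern_cond {m : ℕ} (A : Finset (Fin m)) (p : ℝ) :
    ∑ t ∈ (Finset.univ : Finset (Fin m)).powerset,
      (if t ∩ A = ∅ then p ^ t.card * (1 - p) ^ (m - t.card) else 0) = (1 - p) ^ A.card := by
  rw [Finset.sum_ite, Finset.sum_const, smul_zero, add_zero, filter_powerset_eq]
  exact sum_bern_disj A p

lemma sum_bern_univ {m : ℕ} (p : ℝ) :
    ∑ t ∈ (Finset.univ : Finset (Fin m)).powerset, p ^ t.card * (1 - p) ^ (m - t.card) = 1 := by
  have := sum_bern (Finset.univ : Finset (Fin m)) p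
  simpa using this

lemma sum_bern_mem {m : ℕ} (i : Fin m) (p : ℝ) :
    ∑ t ∈ (Finset.univ : Finset (Fin m)).powerset,
      (if i ∈ t then p ^ t.card * (1 - p) ^ (m - t.card) else 0) = p := by
  have hsplit : ∀ t : Finset (Fin m),
      (if i ∈ t then p ^ t.card * (1 - p) ^ (m - t.card) else 0)
      = p ^ t.card * (1 - p) ^ (m - t.card)
        - (if t ∩ {i} = ∅ then p ^ t.card * (1 - p) ^ (m - t.card) else 0) := by
    intro t
    have : t ∩ {i} = ∅ ↔ i ∉ t := by
      simp [Finset.eq_empty_iff_forall_notMem]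
    by_cases h : i ∈ t
    · rw [if_pos h, if_neg (by simp [this, h])]; ring
    · rw [if_neg h, if_pos (this.mpr h)]; ring
  rw [Finset.sum_congr rfl (fun t _ => hsplit t), Finset.sum_sub_distrib,
    sum_bern_univ, sum_bern_cond]
  simp

lemma exp_card {m : ℕ} (p : ℝ) :
    ∑ t ∈ (Finset.univ : Finset (Fin m)).powerset,
      (p ^ t.card * (1 - p) ^ (m - t.card)) * (t.card : ℝ) = m * p := by
  have hcard : ∀ t : Finset (Fin m), (t.card : ℝ) = ∑ i : Fin m, (if i ∈ t then (1:ℝ) else 0) := by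
    intro t; simp [Finset.sum_boole, Finset.filter_mem_eq_inter]
  calc ∑ t ∈ (Finset.univ : Finset (Fin m)).powerset,
        (p ^ t.card * (1 - p) ^ (m - t.card)) * (t.card : ℝ)
      = ∑ t ∈ (Finset.univ : Finset (Fin m)).powerset, ∑ i : Fin m,
          (if i ∈ t then p ^ t.card * (1 - p) ^ (m - t.card) else 0) := by
        refine Finset.sum_congr rfl (fun t _ => ?_)
        rw [hcard, Finset.mul_sum]
        exact Finset.sum_congr rfl (fun i _ => by by_cases h : i ∈ t <;> simp [h])
    _ = ∑ i : Fin m, ∑ t ∈ (Finset.univ : Finset (Fin m)).powerset,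
          (if i ∈ t then p ^ t.card * (1 - p) ^ (m - t.card) else 0) := Finset.sum_comm
    _ = ∑ _i : Fin m, p := Finset.sum_congr rfl (fun i _ => sum_bern_mem i p)
    _ = m * p := by simp [mul_comm]


lemma exp_zset {n : ℕ} (G : SimpleGraph (Fin n)) (p : ℝ) (hp0 : 0 ≤ p) (hp1 : p ≤ 1) :
    ∑ t ∈ (Finset.univ : Finset (Fin n)).powerset,
      (p ^ t.card * (1 - p) ^ (n - t.card)) * ((ZSet G t).card : ℝ)
    ≤ n * (1 - p) ^ (minHopDeg G + 1) := by
  have hmem : ∀ (i : Fin n) (t : Finset (Fin n)),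
      i ∈ ZSet G t ↔ t ∩ insert i (N2 G i) = ∅ := by
    intro i t
    simp only [ZSet, Finset.mem_filter, Finset.mem_univ, true_and]
    constructor
    · rintro ⟨h1, h2⟩
      ext x
      simp only [Finset.mem_inter, Finset.mem_insert, Finset.notMem_empty, iff_false]
      rintro ⟨hx, (rfl | hx2)⟩
      · exact h1 hx
      · exact (Finset.eq_empty_iff_forall_notMem.mp h2 x) (Finset.mem_inter.mpr ⟨hx2, hx⟩)
    · intro h
      have := Finset.eq_empty_iff_forall_notMem.mp h
      constructor
      · intro hi; exact this i (Finset.mem_inter.mpr ⟨hi, Finset.mem_insert_self _ _⟩)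
      · ext x
        simp only [Finset.mem_inter, Finset.notMem_empty, iff_false]
        rintro ⟨hx2, hx⟩
        exact this x (Finset.mem_inter.mpr ⟨hx, Finset.mem_insert_of_mem hx2⟩)
  have hcardA : ∀ i : Fin n, (insert i (N2 G i)).card = hopDeg G i + 1 := by
    intro i
    rw [Finset.card_insert_of_notMem, hopDeg]
    simp [N2, SimpleGraph.dist_self]
  have hmin : ∀ i : Fin n, minHopDeg G + 1 ≤ hopDeg G i + 1 := by
    intro i
    have : minHopDeg G ≤ hopDeg G i := Nat.sInf_le ⟨i, rfl⟩
    omega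
  calc ∑ t ∈ (Finset.univ : Finset (Fin n)).powerset,
        (p ^ t.card * (1 - p) ^ (n - t.card)) * ((ZSet G t).card : ℝ)
      = ∑ i : Fin n, ∑ t ∈ (Finset.univ : Finset (Fin n)).powerset,
          (if t ∩ insert i (N2 G i) = ∅ then p ^ t.card * (1 - p) ^ (n - t.card) else 0) := by
        rw [← Finset.sum_comm]
        refine Finset.sum_congr rfl (fun t _ => ?_)
        have : ((ZSet G t).card : ℝ) = ∑ i : Fin n, (if i ∈ ZSet G t then (1:ℝ) else 0) := by
          simp [Finset.sum_boole, Finset.filter_mem_eq_inter]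
        rw [this, Finset.mul_sum]
        refine Finset.sum_congr rfl (fun i _ => ?_)
        by_cases h : i ∈ ZSet G t
        · rw [if_pos h, if_pos ((hmem i t).mp h), mul_one]
        · rw [if_neg h, if_neg (fun hc => h ((hmem i t).mpr hc)), mul_zero]
    _ = ∑ i : Fin n, (1 - p) ^ (insert i (N2 G i)).card :=
        Finset.sum_congr rfl (fun i _ => sum_bern_cond _ p)
    _ ≤ ∑ _i : Fin n, (1 - p) ^ (minHopDeg G + 1) := by
        refine Finset.sum_le_sum (fun i _ => ?_)
        rw [hcardA i]
        exact pow_le_pow_of_le_one (by linarith) (by linarith) (hmin i)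
    _ = n * (1 - p) ^ (minHopDeg G + 1) := by simp [mul_comm]

lemma hopDomNum_le_bound {n : ℕ} (G : SimpleGraph (Fin n)) (hδ : 1 ≤ minHopDeg G) :
    (hopDomNum G : ℝ) ≤ n * (Real.log (minHopDeg G + 1) + 1) / (minHopDeg G + 1) := by
  set d : ℕ := minHopDeg G + 1 with hd
  set D : ℝ := (minHopDeg G : ℝ) + 1 with hD
  have hDd : (d : ℝ) = D := by rw [hd, hD]; push_cast; ring
  have hD2 : (2 : ℝ) ≤ D := by
    rw [hD]
    have : (1:ℝ) ≤ (minHopDeg G : ℝ) := by exact_mod_cast hδ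
    linarith
  have hD0 : (0:ℝ) < D := by linarith
  set p : ℝ := Real.log D / D with hp
  have hlog0 : 0 < Real.log D := Real.log_pos (by linarith)
  have hp0 : 0 < p := div_pos hlog0 hD0
  have hp1 : p < 1 := by
    rw [hp, div_lt_one hD0]
    calc Real.log D ≤ D - 1 := Real.log_le_sub_one_of_pos hD0
    _ < D := by linarith
  have hw : ∀ t : Finset (Fin n), 0 < p ^ t.card * (1 - p) ^ (n - t.card) :=
    fun t => mul_pos (pow_pos hp0 _) (pow_pos (by linarith) _)
  set B : ℝ := n * p + n * (1 - p) ^ d with hB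
  have hE : ∑ t ∈ (Finset.univ : Finset (Fin n)).powerset,
      (p ^ t.card * (1 - p) ^ (n - t.card)) * ((t.card : ℝ) + ((ZSet G t).card : ℝ)) ≤ B := by
    rw [hB]
    have : ∀ t ∈ (Finset.univ : Finset (Fin n)).powerset,
        (p ^ t.card * (1 - p) ^ (n - t.card)) * ((t.card : ℝ) + ((ZSet G t).card : ℝ))
        = (p ^ t.card * (1 - p) ^ (n - t.card)) * (t.card : ℝ)
          + (p ^ t.card * (1 - p) ^ (n - t.card)) * ((ZSet G t).card : ℝ) := by
      intro t _; ring
    rw [Finset.sum_congr rfl this, Finset.sum_add_distrib, exp_card]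
    have := exp_zset G p (le_of_lt hp0) (le_of_lt hp1)
    rw [← hd] at this
    linarith
  have hexists : ∃ t : Finset (Fin n), (t.card : ℝ) + ((ZSet G t).card : ℝ) ≤ B := by
    by_contra h
    push_neg at h
    have hlt : ∑ t ∈ (Finset.univ : Finset (Fin n)).powerset,
        (p ^ t.card * (1 - p) ^ (n - t.card)) * B
        < ∑ t ∈ (Finset.univ : Finset (Fin n)).powerset,
        (p ^ t.card * (1 - p) ^ (n - t.card)) * ((t.card : ℝ) + ((ZSet G t).card : ℝ)) := by
      refine Finset.sum_lt_sum_of_nonempty ?_ (fun t _ => ?_)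
      · exact ⟨∅, Finset.mem_powerset.mpr (Finset.empty_subset _)⟩
      · exact mul_lt_mul_of_pos_left (h t) (hw t)
    rw [← Finset.sum_mul, sum_bern_univ, one_mul] at hlt
    linarith
  obtain ⟨t, ht⟩ := hexists
  have hdom : IsHopDomSet G (t ∪ ZSet G t) := by
    intro u hu
    have hu1 : u ∉ t := fun h => hu (Finset.mem_union_left _ h)
    have hu2 : u ∉ ZSet G t := fun h => hu (Finset.mem_union_right _ h)
    simp only [ZSet, Finset.mem_filter, Finset.mem_univ, true_and, not_and] at hu2
    have := hu2 hu1
    obtain ⟨v, hv⟩ := Finset.nonempty_iff_ne_empty.mpr this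
    rw [Finset.mem_inter] at hv
    refine ⟨v, Finset.mem_union_left _ hv.2, ?_⟩
    have := hv.1
    simp only [N2, Finset.mem_filter] at this
    exact this.2
  have hγ : hopDomNum G ≤ (t ∪ ZSet G t).card := Nat.sInf_le ⟨_, hdom, rfl⟩
  have hcard : ((t ∪ ZSet G t).card : ℝ) ≤ (t.card : ℝ) + ((ZSet G t).card : ℝ) := by
    exact_mod_cast Finset.card_union_le _ _
  have hB2 : B ≤ n * (Real.log D + 1) / D := by
    have h1 : (1 - p) ^ d ≤ 1 / D := by
      have e1 : (1 - p) ^ d ≤ Real.exp (-p) ^ d := by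
        apply pow_le_pow_left₀ (by linarith)
        have := Real.add_one_le_exp (-p)
        linarith
      have e2 : Real.exp (-p) ^ d = Real.exp (-(Real.log D)) := by
        rw [← Real.exp_nat_mul]
        rw [hDd, hp]
        field_simp
      rw [e2, Real.exp_neg, Real.exp_log hD0] at e1
      rw [one_div]
      exact e1
    have hn0 : (0:ℝ) ≤ n := Nat.cast_nonneg n
    have h2 : (n:ℝ) * (1 - p) ^ d ≤ n * (1 / D) := by
      exact mul_le_mul_of_nonneg_left h1 hn0
    rw [hB, hp]
    have : (n:ℝ) * (Real.log D / D) + n * (1/D) = n * (Real.log D + 1) / D := by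
      field_simp
    linarith
  have : (hopDomNum G : ℝ) ≤ B := by
    calc (hopDomNum G : ℝ) ≤ ((t ∪ ZSet G t).card : ℝ) := by exact_mod_cast hγ
    _ ≤ (t.card : ℝ) + ((ZSet G t).card : ℝ) := hcard
    _ ≤ B := ht
  calc (hopDomNum G : ℝ) ≤ B := this
  _ ≤ n * (Real.log D + 1) / D := hB2

theorem stmt6 {n : ℕ} (G : SimpleGraph (Fin n)) (hδh : 1 ≤ minHopDeg G)
    (hnpm : ∃ M : SimpleGraph.Subgraph G, M.IsMatching ∧ ∃ v : Fin n, M.verts = {v}ᶜ)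
    (hν : hopDomNum G ≤ matchingNum G) :
    (rhDomNum G : ℝ) ≤
      2 * n * (Real.log (minHopDeg G + 1) + 1) / (minHopDeg G + 1) + 1 := by
  obtain ⟨M, hM, v0, hV⟩ := hnpm
  -- a minimum hop dominating set
  have hne : {k | ∃ S : Finset (Fin n), IsHopDomSet G S ∧ S.card = k}.Nonempty :=
    ⟨(Finset.univ : Finset (Fin n)).card, Finset.univ,
      fun u hu => absurd (Finset.mem_univ u) hu, rfl⟩
  obtain ⟨D0, hD0dom, hD0card⟩ := Nat.sInf_mem hne
  -- the matching partner function
  set f : Fin n → Fin n := fun u => if h : u ∈ M.verts then (hM h).choose else u with hf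
  have hf_adj : ∀ u, u ∈ M.verts → M.Adj u (f u) := by
    intro u h
    rw [hf]
    simp only [dif_pos h]
    exact (hM h).choose_spec.1
  have hf_uniq : ∀ u, u ∈ M.verts → ∀ y, M.Adj u y → y = f u := by
    intro u h y hy
    rw [hf]
    simp only [dif_pos h]
    exact (hM h).choose_spec.2 y hy
  set S : Finset (Fin n) := insert v0 (D0 ∪ D0.image f) with hS
  have hD0S : D0 ⊆ S := fun x hx =>
    Finset.mem_insert_of_mem (Finset.mem_union_left _ hx)
  have hScard : S.card ≤ 2 * D0.card + 1 := by
    calc S.card ≤ (D0 ∪ D0.image f).card + 1 := Finset.card_insert_le _ _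
    _ ≤ (D0.card + (D0.image f).card) + 1 := by
        have := Finset.card_union_le D0 (D0.image f)
        omega
    _ ≤ 2 * D0.card + 1 := by
        have := Finset.card_image_le (f := f) (s := D0)
        omega
  have hSrh : IsRestrainedHopDomSet G S := by
    constructor
    · intro u hu
      have hu0 : u ∉ D0 := fun h => hu (hD0S h)
      obtain ⟨v, hv, hvd⟩ := hD0dom u hu0
      exact ⟨v, hD0S hv, hvd⟩
    · intro u hu
      have hu_v0 : u ≠ v0 := fun h => hu (h ▸ Finset.mem_insert_self _ _)
      have huM : u ∈ M.verts := by
        rw [hV]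
        exact Set.mem_compl_singleton_iff.mpr hu_v0
      have hadj : M.Adj u (f u) := hf_adj u huM
      have hwM : f u ∈ M.verts := M.edge_vert hadj.symm
      have hfw : f (f u) = u := (hf_uniq (f u) hwM u hadj.symm).symm
      refine ⟨f u, ?_, M.adj_sub hadj⟩
      intro hwS
      rw [hS, Finset.mem_insert] at hwS
      rcases hwS with h1 | h2
      · rw [hV] at hwM
        exact Set.mem_compl_singleton_iff.mp hwM h1
      · rw [Finset.mem_union] at h2
        have hwD0 : f u ∉ D0 := by
          intro hw
          apply hu
          rw [← hfw]
          exact Finset.mem_insert_of_mem (Finset.mem_union_right _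
            (Finset.mem_image_of_mem f hw))
        rcases h2 with h2 | h2
        · exact hwD0 h2
        · obtain ⟨dd, hdd, hddf⟩ := Finset.mem_image.mp h2
          by_cases hdM : dd ∈ M.verts
          · have : M.Adj dd (f dd) := hf_adj dd hdM
            rw [hddf] at this
            have : dd = f (f u) := hf_uniq (f u) hwM dd this.symm
            rw [hfw] at this
            apply hu
            apply hD0S
            rw [this] at hdd
            exact hdd
          · have hfd : f dd = dd := by
              rw [hf]; simp only [dif_neg hdM]
            rw [hfd] at hddf
            exact hwD0 (hddf ▸ hdd)
  have hrh : rhDomNum G ≤ 2 * hopDomNum G + 1 := by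
    have h1 : rhDomNum G ≤ S.card := Nat.sInf_le ⟨S, hSrh, rfl⟩
    have hgd : D0.card = hopDomNum G := hD0card
    rw [← hgd]
    exact le_trans h1 hScard
  have hhop := hopDomNum_le_bound G hδh
  have hcast : (rhDomNum G : ℝ) ≤ 2 * (hopDomNum G : ℝ) + 1 := by
    exact_mod_cast hrh
  have hfinal : 2 * ((n : ℝ) * (Real.log ((minHopDeg G : ℝ) + 1) + 1) / ((minHopDeg G : ℝ) + 1)) + 1
      = 2 * n * (Real.log ((minHopDeg G : ℝ) + 1) + 1) / ((minHopDeg G : ℝ) + 1) + 1 := by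
    ring
  linarith
end
end

section
/- Let G be a graph on vertices {1,...,n}. If X ⊆ V, Z = {i ∉ X : N_2(i) ∩ X = ∅}, and Y = {i ∉ X ∪ Z : N(i) ⊆ X ∪ Z}, then D = X ∪ Z ∪ Y is a restrained hop dominating set of G. -/
open Finset

noncomputable section
open scoped Classical

variable {n : ℕ}

theorem stmt7 {n : ℕ} (G : SimpleGraph (Fin n)) (X Z Y : Finset (Fin n))
    (hZ : Z = Finset.univ.filter (fun i => i ∉ X ∧ N2 G i ∩ X = ∅))
    (hY : Y = Finset.univ.filter (fun i => i ∉ X ∪ Z ∧ Nbr G i ⊆ X ∪ Z)) :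
    IsRestrainedHopDomSet G (X ∪ Z ∪ Y) := by
  constructor
  · intro u hu
    simp only [Finset.mem_union] at hu
    push_neg at hu
    obtain ⟨⟨huX, huZ⟩, huY⟩ := hu
    rw [hZ] at huZ
    simp only [Finset.mem_filter, Finset.mem_univ, true_and] at huZ
    push_neg at huZ
    have hne := huZ huX
    obtain ⟨v, hv⟩ := hne
    rw [Finset.mem_inter] at hv
    refine ⟨v, ?_, ?_⟩
    · simp [Finset.mem_union, hv.2]
    · have := hv.1
      simp only [N2, Finset.mem_filter] at this
      exact this.2
  · intro u hu
    simp only [Finset.mem_union] at hu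
    push_neg at hu
    obtain ⟨⟨huX, huZ⟩, huY⟩ := hu
    rw [hY] at huY
    simp only [Finset.mem_filter, Finset.mem_univ, true_and, Finset.mem_union] at huY
    push_neg at huY
    have h := huY (by simp [huX, huZ])
    rw [Finset.not_subset] at h
    obtain ⟨v, hvN, hvXZ⟩ := h
    simp only [Finset.mem_union] at hvXZ
    push_neg at hvXZ
    have hadj : G.Adj u v := by
      simpa [Nbr] using hvN
    refine ⟨v, ?_, hadj⟩
    simp only [Finset.mem_union]
    push_neg
    refine ⟨⟨hvXZ.1, hvXZ.2⟩, ?_⟩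
    rw [hY]
    simp only [Finset.mem_filter, Finset.mem_univ, true_and]
    intro h
    have hu' : u ∈ X ∪ Z := h.2 (by simp [Nbr, hadj.symm])
    simp [Finset.mem_union, huX, huZ] at hu'
end
end

section
/- If G is a graph of order n with minimum hop degree δ_h ≥ 1, then γ_{rh}(G) ≤ 2n·(ln(δ_h + 1) + 1)/(δ_h + 1). -/
open Finset

noncomputable section
open scoped Classical

variable {n : ℕ}

/- AUXILIARY LEMMAS -/

lemma prod_ite_zero (c : ℝ) (s B : Finset (Fin n)) :
    (∏ i ∈ s, if i ∈ B then (0:ℝ) else c) = if s ∩ B = ∅ then c ^ s.card else 0 := by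
  by_cases h : s ∩ B = ∅
  · rw [if_pos h, Finset.prod_congr rfl (fun i hi => if_neg fun hb =>
      Finset.eq_empty_iff_forall_notMem.mp h i (Finset.mem_inter.mpr ⟨hi, hb⟩)),
      Finset.prod_const]
  · rw [if_neg h]
    obtain ⟨i, hi⟩ := Finset.nonempty_iff_ne_empty.mpr h
    obtain ⟨hs, hb⟩ := Finset.mem_inter.mp hi
    exact Finset.prod_eq_zero hs (if_pos hb)

lemma indicator_sum (p : ℝ) (A B : Finset (Fin n)) (hAB : Disjoint A B) :
    ∑ X ∈ (Finset.univ : Finset (Fin n)).powerset,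
      (if A ⊆ X ∧ X ∩ B = ∅ then p ^ X.card * (1 - p) ^ ((Finset.univ : Finset (Fin n)) \ X).card else 0)
      = p ^ A.card * (1 - p) ^ B.card := by
  have key := Finset.prod_add (fun i : Fin n => if i ∈ B then (0:ℝ) else p)
      (fun i : Fin n => if i ∈ A then (0:ℝ) else (1 - p)) Finset.univ
  have hL : (∏ i : Fin n, ((if i ∈ B then (0:ℝ) else p) + (if i ∈ A then (0:ℝ) else (1 - p))))
      = p ^ A.card * (1 - p) ^ B.card := by
    rw [← Finset.prod_sdiff (Finset.subset_univ (A ∪ B)),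
        Finset.prod_union (Finset.disjoint_left.mpr
          (fun a ha hb => Finset.disjoint_left.mp hAB ha hb))]
    have h1 : (∏ i ∈ (Finset.univ : Finset (Fin n)) \ (A ∪ B),
        ((if i ∈ B then (0:ℝ) else p) + (if i ∈ A then (0:ℝ) else (1 - p)))) = 1 := by
      apply Finset.prod_eq_one
      intro i hi
      have := Finset.mem_sdiff.mp hi
      have hiA : i ∉ A := fun h => this.2 (Finset.mem_union_left _ h)
      have hiB : i ∉ B := fun h => this.2 (Finset.mem_union_right _ h)
      rw [if_neg hiB, if_neg hiA]; ring
    have h2 : (∏ i ∈ A,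
        ((if i ∈ B then (0:ℝ) else p) + (if i ∈ A then (0:ℝ) else (1 - p)))) = p ^ A.card := by
      rw [Finset.prod_congr rfl (fun i hi => ?_), Finset.prod_const]
      rw [if_neg (Finset.disjoint_left.mp hAB hi), if_pos hi, add_zero]
    have h3 : (∏ i ∈ B,
        ((if i ∈ B then (0:ℝ) else p) + (if i ∈ A then (0:ℝ) else (1 - p)))) = (1 - p) ^ B.card := by
      rw [Finset.prod_congr rfl (fun i hi => ?_), Finset.prod_const]
      rw [if_pos hi, if_neg (Finset.disjoint_right.mp hAB hi), zero_add]
    rw [h1, h2, h3, one_mul]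
  have hR : ∀ X ∈ (Finset.univ : Finset (Fin n)).powerset,
      ((∏ i ∈ X, (if i ∈ B then (0:ℝ) else p)) *
        ∏ i ∈ (Finset.univ : Finset (Fin n)) \ X, (if i ∈ A then (0:ℝ) else (1 - p)))
      = (if A ⊆ X ∧ X ∩ B = ∅ then p ^ X.card *
          (1 - p) ^ ((Finset.univ : Finset (Fin n)) \ X).card else 0) := by
    intro X _
    rw [prod_ite_zero, prod_ite_zero]
    have hiff : ((Finset.univ : Finset (Fin n)) \ X) ∩ A = ∅ ↔ A ⊆ X := by
      constructor
      · intro h a ha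
        by_contra hax
        exact Finset.eq_empty_iff_forall_notMem.mp h a
          (Finset.mem_inter.mpr ⟨Finset.mem_sdiff.mpr ⟨Finset.mem_univ _, hax⟩, ha⟩)
      · intro h
        apply Finset.eq_empty_iff_forall_notMem.mpr
        intro a ha
        obtain ⟨h1, h2⟩ := Finset.mem_inter.mp ha
        exact (Finset.mem_sdiff.mp h1).2 (h (h2))
    by_cases h1 : X ∩ B = ∅ <;> by_cases h2 : A ⊆ X <;>
      simp [h1, h2, hiff, mul_comm]
  rw [← Finset.sum_congr rfl hR, ← key, hL]

lemma sum_W (p : ℝ) :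
    ∑ X ∈ (Finset.univ : Finset (Fin n)).powerset,
      p ^ X.card * (1 - p) ^ ((Finset.univ : Finset (Fin n)) \ X).card = 1 := by
  have := indicator_sum (n := n) p ∅ ∅ (Finset.disjoint_empty_left _)
  simpa using this

lemma sum_W_ind (p : ℝ) (A B : Finset (Fin n)) (hAB : Disjoint A B) :
    ∑ X ∈ (Finset.univ : Finset (Fin n)).powerset,
      (p ^ X.card * (1 - p) ^ ((Finset.univ : Finset (Fin n)) \ X).card) *
        (if A ⊆ X ∧ X ∩ B = ∅ then (1:ℝ) else 0)
      = p ^ A.card * (1 - p) ^ B.card := by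
  rw [← indicator_sum p A B hAB]
  apply Finset.sum_congr rfl
  intro X _
  by_cases h : A ⊆ X ∧ X ∩ B = ∅ <;> simp [h]

lemma DSet_restrained (G : SimpleGraph (Fin n)) (X : Finset (Fin n)) :
    IsRestrainedHopDomSet G (DSet G X) := by
  constructor
  · intro u hu
    have hu' : u ∉ X ∪ ZSet G X := fun h => hu (Finset.mem_union_left _ h)
    have hx : u ∉ X := fun h => hu' (Finset.mem_union_left _ h)
    have hz : u ∉ ZSet G X := fun h => hu' (Finset.mem_union_right _ h)
    have hne : ¬ (N2 G u ∩ X = ∅) := by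
      intro h; exact hz (Finset.mem_filter.mpr ⟨Finset.mem_univ _, hx, h⟩)
    obtain ⟨v, hv⟩ := Finset.nonempty_iff_ne_empty.mpr hne
    obtain ⟨hv2, hvx⟩ := Finset.mem_inter.mp hv
    exact ⟨v, Finset.mem_union_left _ (Finset.mem_union_left _ hvx),
      (Finset.mem_filter.mp hv2).2⟩
  · intro u hu
    have hu' : u ∉ X ∪ ZSet G X := fun h => hu (Finset.mem_union_left _ h)
    have hy : u ∉ YSet G X := fun h => hu (Finset.mem_union_right _ h)
    have hns : ¬ (Nbr G u ⊆ X ∪ ZSet G X) := by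
      intro h; exact hy (Finset.mem_filter.mpr ⟨Finset.mem_univ _, hu', h⟩)
    obtain ⟨v, hv, hv2⟩ := Finset.not_subset.mp hns
    have hadj : G.Adj u v := (Finset.mem_filter.mp hv).2
    refine ⟨v, ?_, hadj⟩
    intro hvD
    rcases Finset.mem_union.mp hvD with h1 | h2
    · exact hv2 h1
    · obtain ⟨_, _, hsub⟩ := Finset.mem_filter.mp h2
      exact hu' (hsub (Finset.mem_filter.mpr ⟨Finset.mem_univ _, hadj.symm⟩))

theorem stmt9 {n : ℕ} (G : SimpleGraph (Fin n)) (hδh : 1 ≤ minHopDeg G) :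
    (rhDomNum G : ℝ) ≤
      2 * n * (Real.log (minHopDeg G + 1) + 1) / (minHopDeg G + 1) := by
  classical
  set δ : ℕ := minHopDeg G with hδ
  set D : ℝ := (δ : ℝ) + 1 with hD
  have hδ1 : (1:ℝ) ≤ (δ:ℝ) := by exact_mod_cast hδh
  have hD1 : (2:ℝ) ≤ D := by rw [hD]; linarith
  have hDpos : (0:ℝ) < D := by linarith
  set p : ℝ := Real.log D / D with hp
  have hp0 : 0 ≤ p := div_nonneg (Real.log_nonneg (by linarith)) hDpos.le
  have hp1 : p ≤ 1 := by
    rw [hp, div_le_one hDpos]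
    exact Real.log_le_self hDpos.le
  have h1p0 : (0:ℝ) ≤ 1 - p := by linarith
  have h1p1 : 1 - p ≤ 1 := by linarith
  have hpow : (1 - p) ^ (δ + 1) ≤ 1 / D := by
    have h1 : (1 - p) ^ (δ + 1) ≤ Real.exp (-p) ^ (δ + 1) :=
      pow_le_pow_left₀ h1p0 (by linarith [Real.add_one_le_exp (-p)]) _
    have h2 : Real.exp (-p) ^ (δ + 1) = Real.exp (((δ:ℕ) + 1 : ℕ) * (-p)) := by
      rw [Real.exp_nat_mul]
    have h3 : (((δ:ℕ) + 1 : ℕ) : ℝ) * (-p) = - Real.log D := by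
      push_cast
      rw [hp]; field_simp
      rw [hD]; ring
    rw [h2, h3, Real.exp_neg, Real.exp_log hDpos] at h1
    simpa [one_div] using h1
  -- minimum hop degree bounds
  have hδ_le : ∀ i : Fin n, δ ≤ hopDeg G i := fun i => ciInf_le (OrderBot.bddBelow _) i
  -- every vertex has a neighbor
  have hnbr : ∀ i : Fin n, ∃ j, G.Adj i j := by
    intro i
    have h1 : 0 < hopDeg G i := lt_of_lt_of_le (by omega : 0 < δ) (hδ_le i)
    obtain ⟨k, hk⟩ := Finset.card_pos.mp h1
    have hdist : G.dist i k = 2 := (Finset.mem_filter.mp hk).2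
    have hne0 : G.dist i k ≠ 0 := by omega
    have hr : G.Reachable i k := by
      by_contra hnr
      exact hne0 (SimpleGraph.dist_eq_zero_iff_eq_or_not_reachable.mpr (Or.inr hnr))
    obtain ⟨w, hw⟩ := hr.exists_walk_length_eq_dist
    rw [hdist] at hw
    cases w with
    | nil => simp at hw
    | cons h q => exact ⟨_, h⟩
  choose j hj using hnbr
  set W : Finset (Fin n) → ℝ :=
    fun X => p ^ X.card * (1 - p) ^ ((Finset.univ : Finset (Fin n)) \ X).card with hW
  have hWnn : ∀ X, 0 ≤ W X := fun X => mul_nonneg (pow_nonneg hp0 _) (pow_nonneg h1p0 _)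
  have hsumW : ∑ X ∈ (Finset.univ : Finset (Fin n)).powerset, W X = 1 := sum_W p
  have hWind : ∀ (A B : Finset (Fin n)), Disjoint A B →
      ∑ X ∈ (Finset.univ : Finset (Fin n)).powerset,
        W X * (if A ⊆ X ∧ X ∩ B = ∅ then (1:ℝ) else 0) = p ^ A.card * (1 - p) ^ B.card :=
    fun A B hAB => sum_W_ind p A B hAB
  -- indicator sums for cards
  have hcard : ∀ S : Finset (Fin n), (S.card : ℝ) = ∑ i, (if i ∈ S then (1:ℝ) else 0) := by
    intro S
    rw [Finset.sum_ite_mem, Finset.univ_inter, Finset.sum_const, nsmul_eq_mul, mul_one]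
  -- step 1
  have hstep1 : (rhDomNum G : ℝ) ≤ ∑ X ∈ (Finset.univ : Finset (Fin n)).powerset,
      W X * ((X.card : ℝ) + (ZSet G X).card + (YSet G X).card) := by
    calc (rhDomNum G : ℝ)
        = ∑ X ∈ (Finset.univ : Finset (Fin n)).powerset, W X * (rhDomNum G : ℝ) := by
          rw [← Finset.sum_mul, hsumW, one_mul]
      _ ≤ _ := by
          apply Finset.sum_le_sum
          intro X _
          apply mul_le_mul_of_nonneg_left _ (hWnn X)
          have h1 : rhDomNum G ≤ (DSet G X).card :=
            Nat.sInf_le ⟨DSet G X, DSet_restrained G X, rfl⟩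
          have h2 : (DSet G X).card ≤ X.card + (ZSet G X).card + (YSet G X).card := by
            refine le_trans (Finset.card_union_le _ _) ?_
            have := Finset.card_union_le X (ZSet G X)
            omega
          calc (rhDomNum G : ℝ) ≤ ((DSet G X).card : ℝ) := by exact_mod_cast h1
            _ ≤ _ := by exact_mod_cast h2
  -- split into three sums
  have hsplit : ∑ X ∈ (Finset.univ : Finset (Fin n)).powerset,
      W X * ((X.card : ℝ) + (ZSet G X).card + (YSet G X).card)
      = (∑ X ∈ (Finset.univ : Finset (Fin n)).powerset, W X * (X.card : ℝ))
      + (∑ X ∈ (Finset.univ : Finset (Fin n)).powerset, W X * ((ZSet G X).card : ℝ))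
      + (∑ X ∈ (Finset.univ : Finset (Fin n)).powerset, W X * ((YSet G X).card : ℝ)) := by
    rw [← Finset.sum_add_distrib, ← Finset.sum_add_distrib]
    exact Finset.sum_congr rfl fun X _ => by ring
  -- T1
  have hT1 : ∑ X ∈ (Finset.univ : Finset (Fin n)).powerset, W X * (X.card : ℝ) = n * p := by
    calc ∑ X ∈ (Finset.univ : Finset (Fin n)).powerset, W X * (X.card : ℝ)
        = ∑ X ∈ (Finset.univ : Finset (Fin n)).powerset,
            ∑ i, W X * (if i ∈ X then (1:ℝ) else 0) := by
          exact Finset.sum_congr rfl fun X _ => by rw [hcard X, Finset.mul_sum]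
      _ = ∑ i : Fin n, ∑ X ∈ (Finset.univ : Finset (Fin n)).powerset,
            W X * (if i ∈ X then (1:ℝ) else 0) := Finset.sum_comm
      _ = ∑ _i : Fin n, p := by
          refine Finset.sum_congr rfl fun i _ => ?_
          have h := hWind {i} ∅ (Finset.disjoint_empty_right _)
          simp only [Finset.singleton_subset_iff, Finset.inter_empty, and_true,
            Finset.card_singleton, Finset.card_empty, pow_one, pow_zero, mul_one] at h
          exact h
      _ = n * p := by rw [Finset.sum_const, Finset.card_univ, Fintype.card_fin, nsmul_eq_mul]
  -- T2
  have hT2 : ∑ X ∈ (Finset.univ : Finset (Fin n)).powerset, W X * ((ZSet G X).card : ℝ)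
      ≤ n * (1 - p) ^ (δ + 1) := by
    calc ∑ X ∈ (Finset.univ : Finset (Fin n)).powerset, W X * ((ZSet G X).card : ℝ)
        = ∑ i : Fin n, ∑ X ∈ (Finset.univ : Finset (Fin n)).powerset,
            W X * (if i ∈ ZSet G X then (1:ℝ) else 0) := by
          rw [← Finset.sum_comm]
          exact Finset.sum_congr rfl fun X _ => by rw [hcard (ZSet G X), Finset.mul_sum]
      _ ≤ ∑ _i : Fin n, (1 - p) ^ (δ + 1) := by
          apply Finset.sum_le_sum
          intro i _
          have himp : ∀ X : Finset (Fin n), i ∈ ZSet G X →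
              (∅ ⊆ X ∧ X ∩ ({i} ∪ N2 G i) = ∅) := by
            intro X hX
            obtain ⟨_, hix, hN2⟩ := Finset.mem_filter.mp hX
            refine ⟨Finset.empty_subset _, Finset.eq_empty_iff_forall_notMem.mpr ?_⟩
            intro a ha
            obtain ⟨haX, haU⟩ := Finset.mem_inter.mp ha
            rcases Finset.mem_union.mp haU with h | h
            · rw [Finset.mem_singleton] at h; subst h; exact hix haX
            · exact Finset.eq_empty_iff_forall_notMem.mp hN2 a (Finset.mem_inter.mpr ⟨h, haX⟩)
          have hle : ∑ X ∈ (Finset.univ : Finset (Fin n)).powerset,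
              W X * (if i ∈ ZSet G X then (1:ℝ) else 0)
              ≤ ∑ X ∈ (Finset.univ : Finset (Fin n)).powerset,
              W X * (if ∅ ⊆ X ∧ X ∩ ({i} ∪ N2 G i) = ∅ then (1:ℝ) else 0) := by
            apply Finset.sum_le_sum
            intro X _
            apply mul_le_mul_of_nonneg_left _ (hWnn X)
            by_cases hz : i ∈ ZSet G X
            · rw [if_pos hz, if_pos (himp X hz)]
            · rw [if_neg hz]
              split <;> norm_num
          have heq := hWind ∅ ({i} ∪ N2 G i) (Finset.disjoint_empty_left _)
          rw [heq] at hle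
          refine le_trans hle ?_
          have hiN : i ∉ N2 G i := by
            simp [N2, SimpleGraph.dist_self]
          have hcard2 : ({i} ∪ N2 G i).card = 1 + hopDeg G i := by
            rw [Finset.card_union_of_disjoint (Finset.disjoint_singleton_left.mpr hiN)]
            rfl
          rw [Finset.card_empty, pow_zero, one_mul, hcard2]
          exact pow_le_pow_of_le_one h1p0 h1p1 (by have := hδ_le i; omega)
      _ = n * (1 - p) ^ (δ + 1) := by
          rw [Finset.sum_const, Finset.card_univ, Fintype.card_fin, nsmul_eq_mul]
  -- T3
  have hT3 : ∑ X ∈ (Finset.univ : Finset (Fin n)).powerset, W X * ((YSet G X).card : ℝ)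
      ≤ n * (p + (1 - p) ^ (δ + 1)) := by
    calc ∑ X ∈ (Finset.univ : Finset (Fin n)).powerset, W X * ((YSet G X).card : ℝ)
        = ∑ i : Fin n, ∑ X ∈ (Finset.univ : Finset (Fin n)).powerset,
            W X * (if i ∈ YSet G X then (1:ℝ) else 0) := by
          rw [← Finset.sum_comm]
          exact Finset.sum_congr rfl fun X _ => by rw [hcard (YSet G X), Finset.mul_sum]
      _ ≤ ∑ _i : Fin n, (p + (1 - p) ^ (δ + 1)) := by
          apply Finset.sum_le_sum
          intro i _
          have hij : i ≠ j i := (hj i).ne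
          have himp : ∀ X : Finset (Fin n), i ∈ YSet G X →
              ({j i} ⊆ X ∧ X ∩ {i} = ∅) ∨
              (∅ ⊆ X ∧ X ∩ ({i, j i} ∪ N2 G (j i)) = ∅) := by
            intro X hX
            obtain ⟨_, hiXZ, hsub⟩ := Finset.mem_filter.mp hX
            have hix : i ∉ X := fun h => hiXZ (Finset.mem_union_left _ h)
            have hjXZ : j i ∈ X ∪ ZSet G X :=
              hsub (Finset.mem_filter.mpr ⟨Finset.mem_univ _, hj i⟩)
            rcases Finset.mem_union.mp hjXZ with hjX | hjZ
            · left
              refine ⟨Finset.singleton_subset_iff.mpr hjX, ?_⟩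
              apply Finset.eq_empty_iff_forall_notMem.mpr
              intro a ha
              obtain ⟨haX, hai⟩ := Finset.mem_inter.mp ha
              rw [Finset.mem_singleton] at hai; subst hai; exact hix haX
            · right
              obtain ⟨_, hjx, hN2j⟩ := Finset.mem_filter.mp hjZ
              refine ⟨Finset.empty_subset _, Finset.eq_empty_iff_forall_notMem.mpr ?_⟩
              intro a ha
              obtain ⟨haX, haU⟩ := Finset.mem_inter.mp ha
              rcases Finset.mem_union.mp haU with h | h
              · rcases Finset.mem_insert.mp h with h' | h'
                · subst h'; exact hix haX
                · rw [Finset.mem_singleton] at h'; subst h'; exact hjx haX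
              · exact Finset.eq_empty_iff_forall_notMem.mp hN2j a
                  (Finset.mem_inter.mpr ⟨h, haX⟩)
          have hle : ∑ X ∈ (Finset.univ : Finset (Fin n)).powerset,
              W X * (if i ∈ YSet G X then (1:ℝ) else 0)
              ≤ (∑ X ∈ (Finset.univ : Finset (Fin n)).powerset,
                  W X * (if {j i} ⊆ X ∧ X ∩ {i} = ∅ then (1:ℝ) else 0))
                + ∑ X ∈ (Finset.univ : Finset (Fin n)).powerset,
                  W X * (if ∅ ⊆ X ∧ X ∩ ({i, j i} ∪ N2 G (j i)) = ∅ then (1:ℝ) else 0) := by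
            rw [← Finset.sum_add_distrib]
            apply Finset.sum_le_sum
            intro X _
            rw [← mul_add]
            apply mul_le_mul_of_nonneg_left _ (hWnn X)
            have hnn1 : (0:ℝ) ≤ if {j i} ⊆ X ∧ X ∩ {i} = ∅ then (1:ℝ) else 0 := by
              split <;> norm_num
            have hnn2 : (0:ℝ) ≤
                if ∅ ⊆ X ∧ X ∩ ({i, j i} ∪ N2 G (j i)) = ∅ then (1:ℝ) else 0 := by
              split <;> norm_num
            by_cases hy : i ∈ YSet G X
            · rw [if_pos hy]
              rcases himp X hy with h | h
              · rw [if_pos h]; linarith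
              · rw [if_pos h]; linarith
            · rw [if_neg hy]; linarith
          have heq1 := hWind {j i} {i}
            (Finset.disjoint_singleton.mpr (Ne.symm hij))
          have heq2 := hWind ∅ ({i, j i} ∪ N2 G (j i)) (Finset.disjoint_empty_left _)
          rw [heq1, heq2] at hle
          refine le_trans hle ?_
          have hb1 : p ^ ({j i} : Finset (Fin n)).card * (1 - p) ^ ({i} : Finset (Fin n)).card
              ≤ p := by
            rw [Finset.card_singleton, Finset.card_singleton, pow_one, pow_one]
            exact mul_le_of_le_one_right hp0 h1p1
          have hb2 : p ^ (∅ : Finset (Fin n)).card *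
              (1 - p) ^ ({i, j i} ∪ N2 G (j i)).card ≤ (1 - p) ^ (δ + 1) := by
            rw [Finset.card_empty, pow_zero, one_mul]
            have hiN : i ∉ N2 G (j i) := by
              have : G.dist (j i) i = 1 := SimpleGraph.dist_eq_one_iff_adj.mpr (hj i).symm
              simp [N2, this]
            have hsub2 : ({i} ∪ N2 G (j i)) ⊆ ({i, j i} ∪ N2 G (j i)) := by
              apply Finset.union_subset_union_left
              simp
            have hc1 : ({i} ∪ N2 G (j i)).card = 1 + hopDeg G (j i) := by
              rw [Finset.card_union_of_disjoint (Finset.disjoint_singleton_left.mpr hiN)]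
              rfl
            have hc2 : δ + 1 ≤ ({i, j i} ∪ N2 G (j i)).card := by
              have := Finset.card_le_card hsub2
              have := hδ_le (j i)
              omega
            exact pow_le_pow_of_le_one h1p0 h1p1 hc2
          linarith
      _ = n * (p + (1 - p) ^ (δ + 1)) := by
          rw [Finset.sum_const, Finset.card_univ, Fintype.card_fin, nsmul_eq_mul]
  -- combine
  have hfinal : (rhDomNum G : ℝ) ≤ 2 * n * p + 2 * n * (1 / D) := by
    have h1 : (rhDomNum G : ℝ) ≤ 2 * n * p + 2 * n * ((1 - p) ^ (δ + 1)) := by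
      rw [hsplit] at hstep1
      rw [hT1] at hstep1
      linarith
    have hn0 : (0:ℝ) ≤ (n:ℝ) := Nat.cast_nonneg n
    nlinarith [hpow]
  have hcalc : 2 * (n:ℝ) * p + 2 * n * (1 / D) = 2 * n * (Real.log D + 1) / D := by
    rw [hp]; field_simp
  rw [hcalc] at hfinal
  exact hfinal
end
end
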